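/- arXiv:1902.03843 — 2 statements merged into one kernel-verified Lean document; each statement's English description precedes it below -/
import Mathlib

section
/- Let L = (T_1,…,T_ℓ,S) be a tuple as in the setting satisfying conditions (H), (H'), (S), (G), and condition (T1) with its final clause (tail-root clause) omitted. Then conditions (A2) and (A2') hold for all consecutive pairs of L if and only if both condition (T2) and the tail-root clause of (T1) hold. -/
namespace OrthoBij

/-- `lev s i = #i(s) - #(-i)(s)` as an integer. -/
def lev (s : List ℤ) (i : ℤ) : ℤ := (s.count i : ℤ) - (s.count (-i) : ℤ)

/-- A vacillating tableau of dimension `k`: a word with letters in `{-k,…,k}` such that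
every prefix satisfies the three conditions. -/
def IsVacillating (k : ℕ) (w : List ℤ) : Prop :=
  (∀ a ∈ w, -(k : ℤ) ≤ a ∧ a ≤ (k : ℤ)) ∧
  ∀ s : List ℤ, s <+: w →
    (∀ i : ℤ, 1 ≤ i → i ≤ (k : ℤ) → 0 ≤ lev s i) ∧
    (∀ i : ℤ, 1 ≤ i → i + 1 ≤ (k : ℤ) → lev s (i + 1) ≤ lev s i) ∧
    (s.getLast? = some 0 → 0 < lev s (k : ℤ))

/-- The shape of the vacillating tableau is the empty partition. -/
def EmptyShape (k : ℕ) (w : List ℤ) : Prop :=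
  ∀ i : ℤ, 1 ≤ i → i ≤ (k : ℤ) → lev w i = 0

/-- Membership in `W(k,r)`: vacillating tableaux of dimension `k`, length `r`, shape `∅`. -/
def WMem (k r : ℕ) (w : List ℤ) : Prop :=
  IsVacillating k w ∧ w.length = r ∧ EmptyShape k w

/-- A filling of a Young diagram. -/
structure Tableau where
  shape : YoungDiagram
  entry : ℕ → ℕ → ℕ

/-- A standard Young tableau: an injective filling of the diagram with the numbers
`1,…,card`, strictly increasing along rows and columns, zero outside the diagram. -/
def IsSYT (Q : Tableau) : Prop :=
  (∀ i j, (i, j) ∉ Q.shape → Q.entry i j = 0) ∧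
  (∀ i j, (i, j) ∈ Q.shape → 1 ≤ Q.entry i j ∧ Q.entry i j ≤ Q.shape.card) ∧
  (∀ i j i' j', (i, j) ∈ Q.shape → (i', j') ∈ Q.shape →
      Q.entry i j = Q.entry i' j' → (i, j) = (i', j')) ∧
  (∀ i j₁ j₂, j₁ < j₂ → (i, j₂) ∈ Q.shape → Q.entry i j₁ < Q.entry i j₂) ∧
  (∀ i₁ i₂ j, i₁ < i₂ → (i₂, j) ∈ Q.shape → Q.entry i₁ j < Q.entry i₂ j)

/-- The shape has at most `2k+1` rows, all of even length. -/
def EvenRows (k : ℕ) (Q : Tableau) : Prop :=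
  (∀ i, 2 * k + 1 ≤ i → Q.shape.rowLen i = 0) ∧ ∀ i, Even (Q.shape.rowLen i)

/-- Membership in `E(k,r)`: standard Young tableaux with `r` entries whose shape has at
most `2k+1` rows, all of even length. -/
def EMem (k r : ℕ) (Q : Tableau) : Prop :=
  IsSYT Q ∧ Q.shape.card = r ∧ EvenRows k Q

/-- A partition, as a weakly decreasing list of positive integers. -/
def IsPartitionL (μ : List ℕ) : Prop :=
  μ.Pairwise (· ≥ ·) ∧ ∀ x ∈ μ, 0 < x

end OrthoBij

namespace OrthoBij

/-- A two-column skew tableau: inner-shape parameter `a`, right-column length `b`,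
left column `left` and right column `right`, both listed from top to bottom.
The left column occupies rows `a, a+1, …` and the right column rows `0, 1, …, b-1`. -/
structure TwoCol where
  a : ℕ
  b : ℕ
  left : List ℕ
  right : List ℕ

instance : Inhabited TwoCol := ⟨⟨0, 0, [], []⟩⟩

/-- The `i`-th entry of a column, counted from the bottom (`1`-based). -/
def botGet (c : List ℕ) (i : ℕ) : ℕ := c.getD (c.length - i) 0

/-- Row-semistandardness of `T` after sliding the right column down by `s` rows:
whenever the right cell number `t` (now in row `s + t`) has a left neighbour, the left
neighbour is not larger. -/
def SlidOK (T : TwoCol) (s : ℕ) : Prop :=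
  ∀ t, t < T.right.length → T.a ≤ s + t → s + t - T.a < T.left.length →
    T.left.getD (s + t - T.a) 0 ≤ T.right.getD t 0

/-- The residuum of `T` (with tail length `m`): the maximal number of positions the
right column can be slid down while keeping a semistandard skew tableau. -/
noncomputable def residuum (T : TwoCol) (m : ℕ) : ℕ :=
  sSup {s | s ≤ min T.a m ∧ SlidOK T s}

/-- `T` is a valid two-column skew semistandard tableau of shape
`(2^b, 1^m)/(1^a)` with `b ≥ a ≥ 0` both even and residuum at most `1`. -/
def IsTwoCol (m : ℕ) (T : TwoCol) : Prop :=
  Even T.a ∧ Even T.b ∧ T.a ≤ T.b ∧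
  T.left.length = T.b - T.a + m ∧ T.right.length = T.b ∧
  (∀ x ∈ T.left, 0 < x) ∧ (∀ x ∈ T.right, 0 < x) ∧
  T.left.Pairwise (· < ·) ∧ T.right.Pairwise (· < ·) ∧
  SlidOK T 0 ∧ residuum T m ≤ 1

/-- The tail of `T`: the bottom `m` entries of the left column. -/
def tailOf (T : TwoCol) : List ℕ := T.left.drop (T.b - T.a)

/-- The tail root of `T`: the topmost tail entry. -/
def tailRoot (T : TwoCol) : ℕ := T.left.getD (T.b - T.a) 0

/-- The lower tail of `T`: the tail without the tail root. -/
def lowerTail (T : TwoCol) : List ℕ := T.left.drop (T.b - T.a + 1)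

/-- The fin of `T`: the largest (bottom) entry of the right column. -/
def finOf (T : TwoCol) : ℕ := botGet T.right 1

/-- `x` occurs as a gap in the (strictly increasing) column `col`. -/
def IsGapIn (col : List ℕ) (x : ℕ) : Prop := x ∈ col ∧ 1 < x ∧ (x - 1) ∉ col

/-- `x` occurs as a slot in the column `col`. -/
def IsSlotIn (col : List ℕ) (x : ℕ) : Prop := x ∈ col ∧ (x + 1) ∉ col

/-- `T` is of type 1: residuum `0` and all gaps lie in the tail. -/
def Type1 (m : ℕ) (T : TwoCol) : Prop :=
  residuum T m = 0 ∧ (∀ x, ¬ IsGapIn T.right x) ∧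
  ∀ x, IsGapIn T.left x → x ∈ tailOf T

/-- `T` is of type 2: residuum `1` and all gaps lie in the lower tail. -/
def Type2 (m : ℕ) (T : TwoCol) : Prop :=
  residuum T m = 1 ∧ (∀ x, ¬ IsGapIn T.right x) ∧
  ∀ x, IsGapIn T.left x → x ∈ lowerTail T

/-- `T` is of type 3: residuum `1`, the fin is a gap, and all other gaps lie in the
lower tail. -/
def Type3 (m : ℕ) (T : TwoCol) : Prop :=
  residuum T m = 1 ∧ IsGapIn T.right (finOf T) ∧
  (∀ x, IsGapIn T.right x → x = finOf T) ∧
  ∀ x, IsGapIn T.left x → x ∈ lowerTail T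

/-- A skew semistandard tableau of rectangular outer shape, recorded by its columns
(from left to right, each from top to bottom, bottom-aligned in the rectangle). -/
structure RectCols where
  cols : List (List ℕ)

/-- Validity of such a tableau with `c` columns, all of the same length parity. -/
def IsRect (c : ℕ) (S : RectCols) : Prop :=
  S.cols.length = c ∧
  (∀ col ∈ S.cols, col.Pairwise (· < ·) ∧ ∀ x ∈ col, 0 < x) ∧
  (∀ t, t + 1 < c → (S.cols.getD t []).length ≤ (S.cols.getD (t + 1) []).length) ∧
  (∀ t u, t < c → u < c →
      (S.cols.getD t []).length % 2 = (S.cols.getD u []).length % 2) ∧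
  (∀ t i, t + 1 < c → 1 ≤ i → i ≤ (S.cols.getD t []).length →
      botGet (S.cols.getD t []) i ≤ botGet (S.cols.getD (t + 1) []) i)

/-- The leftmost column `S^L` of `S`. -/
def SL (S : RectCols) : List ℕ := S.cols.getD 0 []

/-- `S` is even: its columns have even length. -/
def SEven (S : RectCols) : Prop := (SL S).length % 2 = 0

/-- A tuple `L = (T₁, …, T_ℓ, S)`. -/
structure KTupleData where
  Ts : List TwoCol
  S : RectCols

/-- The `j`-th two-column tableau of the tuple (`0`-based). -/
def TAt (d : KTupleData) (j : ℕ) : TwoCol := d.Ts.getD j default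

/-- The residuum `r_j` of the `j`-th tableau. -/
noncomputable def resAt (μ : List ℕ) (d : KTupleData) (j : ℕ) : ℕ :=
  residuum (TAt d j) (μ.getD j 0)

/-- Structural validity of the tuple for `SO(2k+1)` and the partition `μ`. -/
def IsKTuple (k : ℕ) (μ : List ℕ) (d : KTupleData) : Prop :=
  d.Ts.length = μ.length ∧
  (∀ j, j < μ.length → IsTwoCol (μ.getD j 0) (TAt d j)) ∧
  IsRect (2 * k + 1 - 2 * μ.length) d.S

/-- All columns of the tuple, ordered from left to right. -/
def colListOf (d : KTupleData) : List (List ℕ) :=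
  (d.Ts.map (fun T => [T.left, T.right])).flatten ++ d.S.cols

/-- Condition (H). -/
noncomputable def CondH (μ : List ℕ) (d : KTupleData) : Prop :=
  ∀ i, i + 1 < μ.length →
    (TAt d i).b ≤ (TAt d (i + 1)).b - (TAt d (i + 1)).a +
      2 * resAt μ d i * resAt μ d (i + 1)

/-- Condition (H'). -/
noncomputable def CondH' (μ : List ℕ) (d : KTupleData) : Prop :=
  0 < μ.length →
    (SEven d.S → (TAt d (μ.length - 1)).b ≤ (SL d.S).length) ∧
    (¬ SEven d.S →
      (TAt d (μ.length - 1)).b ≤ (SL d.S).length - 1 + 2 * resAt μ d (μ.length - 1))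

/-- Condition (S): `S` contains no gap. -/
def CondS (d : KTupleData) : Prop :=
  ∀ col ∈ d.S.cols, ∀ x, ¬ IsGapIn col x

/-- Condition (T1) without its final (tail-root) clause. -/
noncomputable def CondT1noTR (μ : List ℕ) (d : KTupleData) : Prop :=
  (∀ i, i < μ.length →
      Type1 (μ.getD i 0) (TAt d i) ∨ Type2 (μ.getD i 0) (TAt d i) ∨
        Type3 (μ.getD i 0) (TAt d i)) ∧
  (∀ i, i + 1 < μ.length → Type3 (μ.getD i 0) (TAt d i) →
      resAt μ d (i + 1) = 1 ∧ finOf (TAt d i) ≤ finOf (TAt d (i + 1))) ∧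
  (0 < μ.length → Type3 (μ.getD (μ.length - 1) 0) (TAt d (μ.length - 1)) →
      ¬ SEven d.S)

/-- The tail-root clause of condition (T1). -/
noncomputable def CondT1TR (μ : List ℕ) (d : KTupleData) : Prop :=
  0 < μ.length → Type1 (μ.getD (μ.length - 1) 0) (TAt d (μ.length - 1)) →
    ¬ SEven d.S → tailRoot (TAt d (μ.length - 1)) ≤ botGet (SL d.S) 1

/-- Condition (T1). -/
noncomputable def CondT1 (μ : List ℕ) (d : KTupleData) : Prop :=
  CondT1noTR μ d ∧ CondT1TR μ d

/-- Condition (T2): the tails, placed side by side with tops aligned, form a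
semistandard Young tableau. -/
def CondT2 (μ : List ℕ) (d : KTupleData) : Prop :=
  ∀ i t, i + 1 < μ.length → t < (tailOf (TAt d (i + 1))).length →
    (tailOf (TAt d i)).getD t 0 ≤ (tailOf (TAt d (i + 1))).getD t 0

/-- Condition (G): for every value `x` there is an injection from the occurrences of
`x` as a gap to the occurrences of `x - 1` as a slot, each gap being assigned a slot
occurrence in a column strictly to its right. -/
def CondG (d : KTupleData) : Prop :=
  ∀ x : ℕ,
    ∃ f : {c : ℕ // c < (colListOf d).length ∧ IsGapIn ((colListOf d).getD c []) x} →
        {c : ℕ // c < (colListOf d).length ∧ IsSlotIn ((colListOf d).getD c []) (x - 1)},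
      Function.Injective f ∧
        ∀ c : {c : ℕ // c < (colListOf d).length ∧
            IsGapIn ((colListOf d).getD c []) x}, c.val < (f c).val

/-- `L` has content `λ`: the letter `x` occurs exactly `λ'_x` times altogether, where
`λ'` is the conjugate partition. -/
def CondContent (lam : List ℕ) (d : KTupleData) : Prop :=
  ∀ x : ℕ, 1 ≤ x →
    ((colListOf d).map (fun col => col.count x)).sum =
      lam.countP (fun y => decide (x ≤ y))

end OrthoBij

namespace OrthoBij

/-- The largest row `ρ`, not beyond the bottom cell of the left column, at which a right
cell with entry `e` may sit so that its left neighbour (if any) is not larger. -/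
noncomputable def maxRowOK (T : TwoCol) (e : ℕ) : ℕ :=
  sSup {ρ | ρ ≤ T.a + T.left.length - 1 ∧ (ρ < T.a ∨ T.left.getD (ρ - T.a) 0 ≤ e)}

/-- Beginning at the bottom, slide each cell of the right column down as far as
possible.  Input: right-column entries from bottom to top and the current row bound;
output: the final rows, bottom cell first. -/
noncomputable def slideGo (T : TwoCol) : List ℕ → ℕ → List ℕ
  | [], _ => []
  | e :: rest, bound =>
      min (maxRowOK T e) bound :: slideGo T rest (min (maxRowOK T e) bound - 1)

/-- The final rows of the right-column cells after sliding down (bottom cell first). -/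
noncomputable def slideRows (T : TwoCol) : List ℕ :=
  slideGo T T.right.reverse (T.a + T.left.length - 1)

/-- `^L T`: the left-column entries that have a right neighbour after the sliding. -/
noncomputable def hatL (T : TwoCol) : List ℕ :=
  ((List.range T.left.length).filter
    (fun u => decide ((T.a + u) ∈ slideRows T))).map (fun u => T.left.getD u 0)

/-- Insert a (row, entry) pair into a list sorted by row. -/
def insertByRow (p : ℕ × ℕ) : List (ℕ × ℕ) → List (ℕ × ℕ)
  | [] => [p]
  | q :: rest => if p.1 ≤ q.1 then p :: q :: rest else q :: insertByRow p rest

/-- Sort a list of (row, entry) pairs by row. -/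
def sortByRow : List (ℕ × ℕ) → List (ℕ × ℕ)
  | [] => []
  | p :: rest => insertByRow p (sortByRow rest)

/-- `^R T`: the right-column entries together with the left-column entries that have no
right neighbour after the sliding, read from top to bottom. -/
noncomputable def hatR (T : TwoCol) : List ℕ :=
  (sortByRow ((slideRows T).zip T.right.reverse ++
    ((List.range T.left.length).filter
      (fun u => decide ((T.a + u) ∉ slideRows T))).map
        (fun u => (T.a + u, T.left.getD u 0)))).map Prod.snd

/-- The smallest row `σ`, not beyond the top cell of the right column, at which a left
cell with entry `e` may sit so that its right neighbour (if any) is not smaller. -/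
noncomputable def minRowOK (T : TwoCol) (e : ℕ) : ℕ :=
  sInf {σ | T.right.length ≤ σ ∨ e ≤ T.right.getD σ 0}

/-- Beginning at the top, slide each cell of the left column up as far as possible. -/
noncomputable def upGo (T : TwoCol) : List ℕ → ℕ → List ℕ
  | [], _ => []
  | e :: rest, low =>
      max (minRowOK T e) low :: upGo T rest (max (minRowOK T e) low + 1)

/-- The final rows of the left-column cells after sliding up (top cell first). -/
noncomputable def upRows (T : TwoCol) : List ℕ := upGo T T.left 0

/-- The index of the largest entry of the right column without left neighbour. -/
noncomputable def starIdx (T : TwoCol) : ℕ :=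
  sSup {t | t < T.right.length ∧ t ∉ upRows T}

/-- `T^{L*}`: all left-column entries together with the largest right-column entry
without left neighbour, read from top to bottom. -/
noncomputable def starL (T : TwoCol) : List ℕ :=
  (sortByRow ((upRows T).zip T.left ++
    [(starIdx T, T.right.getD (starIdx T) 0)])).map Prod.snd

/-- `T^{R*}`: the remaining right-column entries. -/
noncomputable def starR (T : TwoCol) : List ℕ :=
  ((List.range T.right.length).filter (fun t => decide (t ≠ starIdx T))).map
    (fun t => T.right.getD t 0)

/-- Condition (H) for a pair `(T, U)` with tail lengths `mT`, `mU`. -/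
noncomputable def CondHpair (mT mU : ℕ) (T U : TwoCol) : Prop :=
  T.right.length ≤ U.left.length - mU + 2 * residuum T mT * residuum U mU

/-- Condition (A1) for a pair `(T, U)`. -/
noncomputable def CondA1pair (mT mU : ℕ) (T U : TwoCol) : Prop :=
  (residuum T mT * residuum U mU = 0 →
    ∀ i, 1 ≤ i → i ≤ T.right.length →
      i ≤ (hatL U).length ∧ botGet T.right i ≤ botGet (hatL U) i) ∧
  (residuum T mT * residuum U mU = 1 →
    ∀ i, 1 ≤ i → i ≤ (starR T).length →
      i ≤ (hatL U).length ∧ botGet (starR T) i ≤ botGet (hatL U) i)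

/-- Condition (A2) for a pair `(T, U)`. -/
noncomputable def CondA2pair (mT mU : ℕ) (T U : TwoCol) : Prop :=
  (residuum T mT * residuum U mU = 0 →
    ∀ i, 1 ≤ i → i + mT - mU ≤ (hatR T).length →
      i ≤ U.left.length ∧ botGet (hatR T) (i + mT - mU) ≤ botGet U.left i) ∧
  (residuum T mT * residuum U mU = 1 →
    ∀ i, 1 ≤ i → i + mT - mU ≤ (hatR T).length →
      i ≤ (starL U).length ∧ botGet (hatR T) (i + mT - mU) ≤ botGet (starL U) i)

/-- The pair `(T, U)` is admissible. -/
noncomputable def AdmissiblePair (mT mU : ℕ) (T U : TwoCol) : Prop :=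
  CondHpair mT mU T U ∧ CondA1pair mT mU T U ∧ CondA2pair mT mU T U

/-- Condition (H') for the pair `(T, S)`. -/
noncomputable def CondH'pair (mT : ℕ) (T : TwoCol) (S : RectCols) : Prop :=
  (SEven S → T.right.length ≤ (SL S).length) ∧
  (¬ SEven S → T.right.length ≤ (SL S).length - 1 + 2 * residuum T mT)

/-- Condition (A1') for the pair `(T, S)`. -/
noncomputable def CondA1'pair (mT : ℕ) (T : TwoCol) (S : RectCols) : Prop :=
  ((SEven S ∨ residuum T mT = 0) →
    ∀ i, 1 ≤ i → i ≤ T.right.length →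
      i ≤ (SL S).length ∧ botGet T.right i ≤ botGet (SL S) i) ∧
  (¬ (SEven S ∨ residuum T mT = 0) →
    ∀ i, 1 ≤ i → i ≤ (starR T).length →
      i ≤ (SL S).length ∧ botGet (starR T) i ≤ botGet (SL S) i)

/-- Condition (A2') for the pair `(T, S)`. -/
noncomputable def CondA2'pair (mT : ℕ) (T : TwoCol) (S : RectCols) : Prop :=
  ((¬ SEven S ∧ residuum T mT = 0) →
    ∀ i, 1 ≤ i → i + mT - 1 ≤ (hatR T).length →
      i ≤ (SL S).length ∧ botGet (hatR T) (i + mT - 1) ≤ botGet (SL S) i) ∧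
  (¬ (¬ SEven S ∧ residuum T mT = 0) →
    ∀ i, 1 ≤ i → i + mT ≤ (hatR T).length →
      i ≤ (SL S).length ∧ botGet (hatR T) (i + mT) ≤ botGet (SL S) i)

/-- The pair `(T, S)` is admissible. -/
noncomputable def AdmissibleS (mT : ℕ) (T : TwoCol) (S : RectCols) : Prop :=
  CondH'pair mT T S ∧ CondA1'pair mT T S ∧ CondA2'pair mT T S

end OrthoBij

namespace OrthoBij

open List

/-! ### Basic `botGet` lemmas -/

lemma botGet_getD (c : List ℕ) (i : ℕ) : botGet c i = c.getD (c.length - i) 0 := rfl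

lemma botGet_append_right (X Y : List ℕ) (i : ℕ) (h1 : 1 ≤ i) (h2 : i ≤ Y.length) :
    botGet (X ++ Y) i = botGet Y i := by
  unfold botGet
  rw [List.length_append,
    List.getD_eq_getElem _ _ (by rw [List.length_append]; omega),
    List.getD_eq_getElem _ _ (by omega),
    List.getElem_append_right (by omega)]
  congr 1
  omega

lemma botGet_append_left (X Y : List ℕ) (i : ℕ) (h1 : Y.length < i)
    (h2 : i ≤ X.length + Y.length) :
    botGet (X ++ Y) i = botGet X (i - Y.length) := by
  unfold botGet
  rw [List.length_append,
    List.getD_eq_getElem _ _ (by rw [List.length_append]; omega),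
    List.getD_eq_getElem _ _ (by omega),
    List.getElem_append_left (by omega)]
  congr 1
  omega

lemma botGet_range' (n i : ℕ) (h1 : 1 ≤ i) (h2 : i ≤ n) :
    botGet (List.range' 1 n) i = n + 1 - i := by
  unfold botGet
  rw [List.length_range', List.getD_eq_getElem _ _ (by rw [List.length_range']; omega),
    List.getElem_range']
  omega

lemma botGet_tailpart (X tl : List ℕ) (i : ℕ) (h1 : 1 ≤ i) (h2 : i ≤ tl.length) :
    botGet (X ++ tl) i = tl.getD (tl.length - i) 0 :=
  botGet_append_right X tl i h1 h2

/-! ### getD variants -/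

lemma getD_mem {col : List ℕ} {j : ℕ} (hj : j < col.length) : col.getD j 0 ∈ col := by
  rw [List.getD_eq_getElem _ _ hj]
  exact List.getElem_mem _

lemma mem_iff_getD {col : List ℕ} {x : ℕ} :
    x ∈ col ↔ ∃ j, j < col.length ∧ col.getD j 0 = x := by
  constructor
  · intro hx
    rw [List.mem_iff_getElem] at hx
    obtain ⟨j, hj, he⟩ := hx
    exact ⟨j, hj, by rw [List.getD_eq_getElem _ _ hj]; exact he⟩
  · rintro ⟨j, hj, he⟩
    rw [← he]
    exact getD_mem hj

lemma sorted_getD_lt {col : List ℕ} (hs : col.Pairwise (· < ·)) {i j : ℕ} (hij : i < j)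
    (hj : j < col.length) : col.getD i 0 < col.getD j 0 := by
  rw [List.getD_eq_getElem _ _ (by omega), List.getD_eq_getElem _ _ hj]
  exact List.pairwise_iff_getElem.1 hs i j (by omega) hj hij

lemma sorted_getD_le {col : List ℕ} (hs : col.Pairwise (· < ·)) {i j : ℕ} (hij : i ≤ j)
    (hj : j < col.length) : col.getD i 0 ≤ col.getD j 0 := by
  rcases Nat.lt_or_ge i j with h | h
  · exact le_of_lt (sorted_getD_lt hs h hj)
  · have : i = j := by omega
    subst this; exact le_refl _

/-! ### Canonical form of gap-restricted columns -/

lemma take_canon_getD (col : List ℕ) (hs : col.Pairwise (· < ·)) (hpos : ∀ x ∈ col, 0 < x)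
    (q : ℕ) (hq : q ≤ col.length) (hg : ∀ x, IsGapIn col x → x ∈ col.drop q) :
    ∀ j, j < q → col.getD j 0 = j + 1 := by
  have hnogap : ∀ t, t < q → ¬ IsGapIn col (col.getD t 0) := by
    intro t ht hgap
    have mem := hg _ hgap
    rw [mem_iff_getD] at mem
    obtain ⟨i, hi, heq⟩ := mem
    rw [List.length_drop] at hi
    rw [List.getD_eq_getElem _ _ (by rw [List.length_drop]; omega), List.getElem_drop,
      ← List.getD_eq_getElem col 0 (by omega)] at heq
    have hlt : col.getD t 0 < col.getD (q + i) 0 := sorted_getD_lt hs (by omega) (by omega)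
    omega
  intro j
  induction j with
  | zero =>
    intro hj
    have hpos0 : 0 < col.getD 0 0 := hpos _ (getD_mem (by omega))
    by_contra hne
    apply hnogap 0 hj
    refine ⟨getD_mem (by omega), by omega, ?_⟩
    intro hmem
    rw [mem_iff_getD] at hmem
    obtain ⟨i, hi, heq⟩ := hmem
    rcases Nat.eq_zero_or_pos i with h | h
    · subst h; omega
    · have := sorted_getD_lt hs (show 0 < i by omega) hi
      omega
  | succ j ih =>
    intro hj
    have hval : col.getD j 0 = j + 1 := ih (by omega)
    have hlt : col.getD j 0 < col.getD (j+1) 0 := sorted_getD_lt hs (by omega) (by omega)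
    by_contra hne
    apply hnogap (j+1) hj
    refine ⟨getD_mem (by omega), by omega, ?_⟩
    intro hmem
    rw [mem_iff_getD] at hmem
    obtain ⟨i, hi, heq⟩ := hmem
    rcases lt_trichotomy i (j+1) with h | h | h
    · have : col.getD i 0 ≤ col.getD j 0 := sorted_getD_le hs (by omega) (by omega)
      omega
    · subst h; omega
    · have := sorted_getD_lt hs h hi
      omega

lemma take_canon (col : List ℕ) (hs : col.Pairwise (· < ·)) (hpos : ∀ x ∈ col, 0 < x)
    (q : ℕ) (hq : q ≤ col.length) (hg : ∀ x, IsGapIn col x → x ∈ col.drop q) :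
    col.take q = List.range' 1 q := by
  apply List.ext_getElem
  · rw [List.length_take, List.length_range']; omega
  · intro i h1 h2
    have hiq : i < q := by simpa using h2
    rw [List.getElem_take, List.getElem_range',
      ← List.getD_eq_getElem col 0 (by omega),
      take_canon_getD col hs hpos q hq hg i hiq]
    omega

lemma col_decomp (col : List ℕ) (hs : col.Pairwise (· < ·)) (hpos : ∀ x ∈ col, 0 < x)
    (q : ℕ) (hq : q ≤ col.length) (hg : ∀ x, IsGapIn col x → x ∈ col.drop q) :
    col = List.range' 1 q ++ col.drop q := by
  conv_lhs => rw [← List.take_append_drop q col]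
  rw [take_canon col hs hpos q hq hg]

lemma gapfree_canon (col : List ℕ) (hs : col.Pairwise (· < ·)) (hpos : ∀ x ∈ col, 0 < x)
    (hg : ∀ x, ¬ IsGapIn col x) : col = List.range' 1 col.length := by
  have := col_decomp col hs hpos col.length (le_refl _) (fun x hx => absurd hx (hg x))
  simpa using this

end OrthoBij
namespace OrthoBij

open List

/-! ### sortByRow -/

/-- key order -/
def rkey (p q : ℕ × ℕ) : Prop := p.1 ≤ q.1

instance : DecidableRel rkey := fun p q => Nat.decLe p.1 q.1

lemma insertByRow_eq_orderedInsert (p : ℕ × ℕ) (l : List (ℕ × ℕ)) :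
    insertByRow p l = List.orderedInsert rkey p l := by
  induction l with
  | nil => rfl
  | cons q rest ih =>
    simp only [insertByRow, List.orderedInsert, ih]
    rfl

lemma sortByRow_eq_insertionSort (l : List (ℕ × ℕ)) :
    sortByRow l = List.insertionSort rkey l := by
  induction l with
  | nil => rfl
  | cons p rest ih => simp only [sortByRow, List.insertionSort, ih,
      insertByRow_eq_orderedInsert, List.foldr_cons]

instance : IsTotal (ℕ × ℕ) rkey := ⟨fun p q => Nat.le_total p.1 q.1⟩
instance : IsTrans (ℕ × ℕ) rkey := ⟨fun _ _ _ h1 h2 => Nat.le_trans h1 h2⟩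

lemma sortByRow_perm (l : List (ℕ × ℕ)) : sortByRow l ~ l := by
  rw [sortByRow_eq_insertionSort]; exact List.perm_insertionSort rkey l

lemma sortByRow_sorted (l : List (ℕ × ℕ)) : (sortByRow l).Pairwise rkey := by
  rw [sortByRow_eq_insertionSort]; exact List.pairwise_insertionSort rkey l

lemma eq_of_perm_of_sorted_keys : ∀ {Z X : List (ℕ × ℕ)}, X.Pairwise rkey →
    Z.Pairwise (fun p q => p.1 < q.1) → X ~ Z → X = Z := by
  intro Z
  induction Z with
  | nil => intro X _ _ hp; exact hp.eq_nil
  | cons z Z' ih =>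
    intro X hX hZ hp
    match X, hp with
    | [], hp => exact absurd hp.symm (by simp)
    | x :: X', hp =>
      have hxz : x = z := by
        have hxmem : x ∈ z :: Z' := hp.subset (List.mem_cons_self)
        have hzmem : z ∈ x :: X' := hp.symm.subset (List.mem_cons_self)
        rcases List.mem_cons.1 hxmem with h | h
        · exact h
        rcases List.mem_cons.1 hzmem with h' | h'
        · exact h'.symm
        · have h1 : z.1 < x.1 := (List.pairwise_cons.1 hZ).1 x h
          have h2 : x.1 ≤ z.1 := (List.pairwise_cons.1 hX).1 z h'
          omega
      subst hxz
      have := ih (List.pairwise_cons.1 hX).2 (List.pairwise_cons.1 hZ).2 hp.cons_inv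
      rw [this]

lemma sortByRow_eq (l Z : List (ℕ × ℕ)) (hZ : Z.Pairwise (fun p q => p.1 < q.1))
    (hperm : l ~ Z) : sortByRow l = Z :=
  eq_of_perm_of_sorted_keys (sortByRow_sorted l) hZ ((sortByRow_perm l).trans hperm)

end OrthoBij
namespace OrthoBij

open List

/-! ### getD on drops and appends -/

lemma getD_drop' (l : List ℕ) (n i : ℕ) : (l.drop n).getD i 0 = l.getD (n + i) 0 := by
  rcases Nat.lt_or_ge (n+i) l.length with h | h
  · rw [List.getD_eq_getElem _ _ (by rw [List.length_drop]; omega), List.getElem_drop,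
      List.getD_eq_getElem _ _ h]
  · rw [List.getD_eq_default _ _ (by rw [List.length_drop]; omega), List.getD_eq_default _ _ h]

lemma eq_singleton_of_length_one {l : List ℕ} (h : l.length = 1) : l = [l.getD 0 0] := by
  cases l with
  | nil => simp at h
  | cons a t => cases t with
    | nil => rfl
    | cons b t' => simp at h

lemma range'_one_split (n : ℕ) (h : 0 < n) :
    List.range' 1 n = List.range' 1 (n-1) ++ [n] := by
  have h2 : List.range' 1 (n-1+1) = List.range' 1 (n-1) ++ [1 + 1 * (n-1)] :=
    List.range'_concat (s := 1) (n := n-1)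
  rw [show n - 1 + 1 = n by omega, show 1 + 1 * (n-1) = n by omega] at h2
  exact h2

/-! ### residuum facts -/

lemma residuum_bdd (T : TwoCol) (m : ℕ) :
    BddAbove {s | s ≤ min T.a m ∧ SlidOK T s} := ⟨min T.a m, fun _ hx => hx.1⟩

lemma residuum_spec {m : ℕ} {T : TwoCol} (h0 : SlidOK T 0) :
    residuum T m ≤ min T.a m ∧ SlidOK T (residuum T m) :=
  Nat.sSup_mem ⟨0, And.intro (Nat.zero_le _) h0⟩ (residuum_bdd T m)

lemma le_residuum {m : ℕ} {T : TwoCol} {s : ℕ} (hs : s ≤ min T.a m) (hok : SlidOK T s) :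
    s ≤ residuum T m := le_csSup (residuum_bdd T m) ⟨hs, hok⟩

/-! ### Canonical structure of a valid two-column tableau -/

structure Canon (m : ℕ) (T : TwoCol) : Prop where
  hm : 1 ≤ m
  hab : T.a ≤ T.b
  llen : T.left.length = T.b - T.a + m
  rlen : T.right.length = T.b
  tlen : (tailOf T).length = m
  left_eq : T.left = List.range' 1 (T.b - T.a) ++ tailOf T
  tsort : (tailOf T).Pairwise (· < ·)
  troot_gt : T.b - T.a < (tailOf T).getD 0 0
  rsplit : T.right = List.range' 1 (T.b - 1) ++ [finOf T] ∨ (T.b = 0 ∧ T.right = [])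
  hfin_ge : T.b ≤ finOf T
  hr : residuum T m ≤ 1
  hra : residuum T m ≤ T.a
  hrm : residuum T m ≤ m
  hr0 : residuum T m = 0 → T.b < (tailOf T).getD 0 0
  hr1 : residuum T m = 1 → 2 ≤ T.a ∧ (tailOf T).getD 0 0 = T.b - T.a + 1
  tail_gt_fin : ∀ j, residuum T m ≤ j → j < m → finOf T < (tailOf T).getD j 0
  hfin12 : Type1 m T ∨ Type2 m T → finOf T = T.b
  htype3 : Type3 m T → T.b + 1 ≤ finOf T

namespace Canon

lemma lval {m : ℕ} {T : TwoCol} (c : Canon m T) {u : ℕ} (hu : u < T.b - T.a) :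
    T.left.getD u 0 = u + 1 := by
  rw [c.left_eq, List.getD_append _ _ _ _ (by rw [List.length_range']; omega),
    List.getD_eq_getElem _ _ (by rw [List.length_range']; omega), List.getElem_range']
  omega

lemma lval_tail {m : ℕ} {T : TwoCol} (c : Canon m T) (j : ℕ) :
    T.left.getD (T.b - T.a + j) 0 = (tailOf T).getD j 0 := by
  rw [c.left_eq, List.getD_append_right _ _ _ _ (by rw [List.length_range']; omega)]
  congr 1
  rw [List.length_range']
  omega

lemma rval {m : ℕ} {T : TwoCol} (c : Canon m T) {t : ℕ} (ht : t < T.b - 1) :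
    T.right.getD t 0 = t + 1 := by
  rcases c.rsplit with h | ⟨h0, _⟩
  · rw [h, List.getD_append _ _ _ _ (by rw [List.length_range']; omega),
      List.getD_eq_getElem _ _ (by rw [List.length_range']; omega), List.getElem_range']
    omega
  · omega

lemma rval_fin {m : ℕ} {T : TwoCol} (c : Canon m T) (hb : 1 ≤ T.b) :
    T.right.getD (T.b - 1) 0 = finOf T := by
  rcases c.rsplit with h | ⟨h0, _⟩
  · rw [h, List.getD_append_right _ _ _ _ (by simp [List.length_range'])]
    simp [List.length_range']
  · omega

lemma rval_ge {m : ℕ} {T : TwoCol} (c : Canon m T) {t : ℕ} (ht : t < T.b) :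
    t + 1 ≤ T.right.getD t 0 := by
  rcases Nat.lt_or_ge t (T.b - 1) with h | h
  · rw [c.rval h]
  · have : t = T.b - 1 := by omega
    subst this
    rw [c.rval_fin (by omega)]
    have := c.hfin_ge
    omega

lemma troot_eq {m : ℕ} {T : TwoCol} (c : Canon m T) :
    tailRoot T = (tailOf T).getD 0 0 := by
  unfold tailRoot tailOf
  rw [getD_drop']
  simp

lemma lowerTail_eq {m : ℕ} {T : TwoCol} (c : Canon m T) :
    lowerTail T = (tailOf T).drop 1 := by
  unfold lowerTail tailOf
  rw [List.drop_drop]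

end Canon

lemma mkCanon {m : ℕ} {T : TwoCol} (hm : 1 ≤ m) (h : IsTwoCol m T)
    (ht : Type1 m T ∨ Type2 m T ∨ Type3 m T) : Canon m T := by
  obtain ⟨hea, heb, hab, hllen, hrlen, hlpos, hrpos, hlsort, hrsort, hok0, hrle⟩ := h
  have hspec := residuum_spec (m := m) hok0
  have hra : residuum T m ≤ T.a := le_trans hspec.1 (min_le_left _ _)
  have hrm : residuum T m ≤ m := le_trans hspec.1 (min_le_right _ _)
  have htlen : (tailOf T).length = m := by
    unfold tailOf; rw [List.length_drop, hllen]; omega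
  -- gaps of the left column lie in the tail, in all three cases
  have hlg : ∀ x, IsGapIn T.left x → x ∈ T.left.drop (T.b - T.a) := by
    intro x hx
    rcases ht with h1 | h2 | h3
    · exact h1.2.2 x hx
    · have := h2.2.2 x hx
      unfold lowerTail at this
      have hsub : T.left.drop (T.b - T.a + 1) ⊆ T.left.drop (T.b - T.a) := by
        rw [show T.b - T.a + 1 = T.b - T.a + 1 from rfl, ← List.drop_drop]
        exact List.drop_subset _ _
      exact hsub this
    · have := h3.2.2.2 x hx
      unfold lowerTail at this
      have hsub : T.left.drop (T.b - T.a + 1) ⊆ T.left.drop (T.b - T.a) := by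
        rw [← List.drop_drop]
        exact List.drop_subset _ _
      exact hsub this
  have left_eq : T.left = List.range' 1 (T.b - T.a) ++ tailOf T := by
    unfold tailOf
    exact col_decomp T.left hlsort hlpos (T.b - T.a) (by omega) hlg
  have tsort : (tailOf T).Pairwise (· < ·) := List.Pairwise.sublist (List.drop_sublist _ _) hlsort
  have troot_gt : T.b - T.a < (tailOf T).getD 0 0 := by
    have h0 : (tailOf T).getD 0 0 = T.left.getD (T.b - T.a) 0 := by
      unfold tailOf; rw [getD_drop']; simp
    rcases Nat.eq_zero_or_pos (T.b - T.a) with hz | hpz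
    · have hmem : T.left.getD (T.b - T.a) 0 ∈ T.left := getD_mem (by omega)
      have := hlpos _ hmem
      omega
    · have h1 : T.left.getD (T.b - T.a - 1) 0 = T.b - T.a := by
        rw [take_canon_getD T.left hlsort hlpos (T.b - T.a) (by omega) hlg _ (by omega)]
        omega
      have h2 : T.left.getD (T.b - T.a - 1) 0 < T.left.getD (T.b - T.a) 0 :=
        sorted_getD_lt hlsort (by omega) (by omega)
      omega
  -- right column
  have rsplit : T.right = List.range' 1 (T.b - 1) ++ [finOf T] ∨ (T.b = 0 ∧ T.right = []) := by
    rcases Nat.eq_zero_or_pos T.b with hb0 | hbpos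
    · right
      exact ⟨hb0, by rw [← List.length_eq_zero_iff]; omega⟩
    · left
      rcases ht with h1 | h2 | h3
      · have hcan : T.right = List.range' 1 T.b := by
          have := gapfree_canon T.right hrsort hrpos h1.2.1
          rwa [hrlen] at this
        have hfe : finOf T = T.b := by
          unfold finOf botGet
          rw [hrlen, hcan, List.getD_eq_getElem _ _ (by rw [List.length_range']; omega),
            List.getElem_range']
          omega
        rw [hcan, hfe, ← range'_one_split T.b hbpos]
      · have hcan : T.right = List.range' 1 T.b := by
          have := gapfree_canon T.right hrsort hrpos h2.2.1
          rwa [hrlen] at this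
        have hfe : finOf T = T.b := by
          unfold finOf botGet
          rw [hrlen, hcan, List.getD_eq_getElem _ _ (by rw [List.length_range']; omega),
            List.getElem_range']
          omega
        rw [hcan, hfe, ← range'_one_split T.b hbpos]
      · have hfg : ∀ x, IsGapIn T.right x → x ∈ T.right.drop (T.b - 1) := by
          intro x hx
          have hxf := h3.2.2.1 x hx
          subst hxf
          have hmem : (T.right.drop (T.b - 1)).getD 0 0 ∈ T.right.drop (T.b - 1) :=
            getD_mem (by rw [List.length_drop]; omega)
          rw [getD_drop', Nat.add_zero] at hmem
          unfold finOf botGet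
          rw [hrlen]
          exact hmem
        have hdec := col_decomp T.right hrsort hrpos (T.b - 1) (by omega) hfg
        have hlen1 : (T.right.drop (T.b - 1)).length = 1 := by
          rw [List.length_drop]; omega
        have hsing := eq_singleton_of_length_one hlen1
        rw [getD_drop'] at hsing
        have hfin : T.right.getD (T.b - 1 + 0) 0 = finOf T := by
          unfold finOf botGet
          rw [hrlen, Nat.add_zero]
        rw [hfin] at hsing
        rw [hdec, hsing]
  have hfinval : 1 ≤ T.b → T.right.getD (T.b - 1) 0 = finOf T := by
    intro hb
    unfold finOf botGet
    rw [hrlen]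
  have hfin0 : T.b = 0 → finOf T = 0 := by
    intro hb0
    unfold finOf botGet
    have : T.right = [] := by rw [← List.length_eq_zero_iff]; omega
    rw [this]
    simp
  have hfin12 : Type1 m T ∨ Type2 m T → finOf T = T.b := by
    intro h12
    rcases Nat.eq_zero_or_pos T.b with hb0 | hbpos
    · rw [hfin0 hb0, hb0]
    · have hgf : ∀ x, ¬ IsGapIn T.right x := by
        rcases h12 with h1 | h2
        · exact h1.2.1
        · exact h2.2.1
      have hcan : T.right = List.range' 1 T.b := by
        have := gapfree_canon T.right hrsort hrpos hgf
        rwa [hrlen] at this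
      rw [← hfinval hbpos, hcan, List.getD_eq_getElem _ _ (by rw [List.length_range']; omega),
        List.getElem_range']
      omega
  have htype3 : Type3 m T → T.b + 1 ≤ finOf T := by
    intro h3
    have hbpos : 1 ≤ T.b := by
      by_contra hc
      have hb0 : T.b = 0 := by omega
      have := h3.2.1.1
      have hre : T.right = [] := by rw [← List.length_eq_zero_iff]; omega
      rw [hre] at this
      simp at this
    have hb2 : 2 ≤ T.b := by
      rcases heb with ⟨c, hc⟩
      omega
    have hprev : T.right.getD (T.b - 2) 0 = T.b - 1 := by
      rcases rsplit with hr | ⟨h0, _⟩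
      · rw [hr, List.getD_append _ _ _ _ (by rw [List.length_range']; omega),
          List.getD_eq_getElem _ _ (by rw [List.length_range']; omega), List.getElem_range']
        omega
      · omega
    have hlt : T.right.getD (T.b - 2) 0 < T.right.getD (T.b - 1) 0 :=
      sorted_getD_lt hrsort (by omega) (by omega)
    rw [hfinval hbpos] at hlt
    have hne : finOf T ≠ T.b := by
      intro heq
      have hgap := h3.2.1
      have : finOf T - 1 ∈ T.right := by
        rw [heq]
        rw [← hprev]
        exact getD_mem (by omega)
      exact hgap.2.2 this
    omega
  have hfin_ge : T.b ≤ finOf T := by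
    rcases ht with h1 | h2 | h3
    · rw [hfin12 (Or.inl h1)]
    · rw [hfin12 (Or.inr h2)]
    · have := htype3 h3
      omega
  -- eval lemmas needed before Canon is built
  have lval : ∀ u < T.b - T.a, T.left.getD u 0 = u + 1 := by
    intro u hu
    rw [left_eq, List.getD_append _ _ _ _ (by rw [List.length_range']; omega),
      List.getD_eq_getElem _ _ (by rw [List.length_range']; omega), List.getElem_range']
    omega
  have lval_tail : ∀ j, T.left.getD (T.b - T.a + j) 0 = (tailOf T).getD j 0 := by
    intro j
    rw [left_eq, List.getD_append_right _ _ _ _ (by rw [List.length_range']; omega)]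
    congr 1
    rw [List.length_range']
    omega
  have rval_ge : ∀ t < T.b, t + 1 ≤ T.right.getD t 0 := by
    intro t htb
    rcases rsplit with hr | ⟨h0, _⟩
    · rcases Nat.lt_or_ge t (T.b - 1) with hlt | hge
      · rw [hr, List.getD_append _ _ _ _ (by rw [List.length_range']; omega),
          List.getD_eq_getElem _ _ (by rw [List.length_range']; omega), List.getElem_range']
        omega
      · have : t = T.b - 1 := by omega
        subst this
        rw [hfinval (by omega)]
        omega
    · omega
  have rvalloc : ∀ t, t < T.b - 1 → T.right.getD t 0 = t + 1 := by
    intro t htb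
    rcases rsplit with hrr | ⟨h0, _⟩
    · rw [hrr, List.getD_append _ _ _ _ (by rw [List.length_range']; omega),
        List.getD_eq_getElem _ _ (by rw [List.length_range']; omega), List.getElem_range']
      omega
    · omega
  have hr0 : residuum T m = 0 → T.b < (tailOf T).getD 0 0 := by
    intro hres0
    rcases Nat.eq_zero_or_pos T.a with ha0 | hapos
    · rw [ha0] at troot_gt
      omega
    · by_contra hc
      have htr : (tailOf T).getD 0 0 ≤ T.b := by omega
      have hok1 : SlidOK T 1 := by
        intro t htb hta hl
        rw [hrlen] at htb
        rw [hllen] at hl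
        rcases Nat.lt_or_ge (1 + t - T.a) (T.b - T.a) with hu | hu
        · rw [lval _ hu]
          have := rval_ge t htb
          omega
        · have hj : 1 + t - T.a = T.b - T.a + 0 := by omega
          rw [hj, lval_tail 0]
          have ht1 : t = T.b - 1 := by omega
          subst ht1
          rw [hfinval (by omega)]
          omega
      have := le_residuum (s := 1) (m := m) (by omega) hok1
      omega
  have hr1 : residuum T m = 1 → 2 ≤ T.a ∧ (tailOf T).getD 0 0 = T.b - T.a + 1 := by
    intro hres1
    have ha1 : 1 ≤ T.a := by omega
    have ha2 : 2 ≤ T.a := by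
      rcases hea with ⟨c, hc⟩
      omega
    refine ⟨ha2, ?_⟩
    have hnt1 : ¬ Type1 m T := by
      intro h1
      rw [h1.1] at hres1
      omega
    have h23 : Type2 m T ∨ Type3 m T := by
      rcases ht with h1 | h2 | h3
      · exact absurd h1 hnt1
      · exact Or.inl h2
      · exact Or.inr h3
    have hlg2 : ∀ x, IsGapIn T.left x → x ∈ T.left.drop (T.b - T.a + 1) := by
      intro x hx
      rcases h23 with h2 | h3
      · have := h2.2.2 x hx; unfold lowerTail at this; exact this
      · have := h3.2.2.2 x hx; unfold lowerTail at this; exact this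
    have := take_canon_getD T.left hlsort hlpos (T.b - T.a + 1) (by omega) hlg2
      (T.b - T.a) (by omega)
    have h0 : (tailOf T).getD 0 0 = T.left.getD (T.b - T.a) 0 := by
      unfold tailOf; rw [getD_drop']; simp
    omega
  have tail_gt_fin : ∀ j, residuum T m ≤ j → j < m → finOf T < (tailOf T).getD j 0 := by
    have hmain : residuum T m < m → finOf T < (tailOf T).getD (residuum T m) 0 := by
      intro hrm'
      rcases Nat.eq_zero_or_pos (residuum T m) with hres0 | hrespos
      · rw [hres0]
        have h1 : Type1 m T := by
          rcases ht with h1 | h2 | h3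
          · exact h1
          · rw [h2.1] at hres0; omega
          · rw [h3.1] at hres0; omega
        rw [hfin12 (Or.inl h1)]
        exact hr0 hres0
      · have hres1 : residuum T m = 1 := by omega
        rw [hres1]
        obtain ⟨ha2, htroot⟩ := hr1 hres1
        have hb2 : 2 ≤ T.b := by omega
        by_contra hc
        have ht1 : (tailOf T).getD 1 0 ≤ finOf T := by omega
        have hok2 : SlidOK T 2 := by
          intro t htb hta hl
          rw [hrlen] at htb
          rw [hllen] at hl
          rcases Nat.lt_or_ge (2 + t - T.a) (T.b - T.a) with hu | hu
          · rw [lval _ hu]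
            have := rval_ge t htb
            omega
          · rcases Nat.eq_or_lt_of_le hu with heq | hlt
            · have hj : 2 + t - T.a = T.b - T.a + 0 := by omega
              rw [hj, lval_tail 0]
              have ht2 : t = T.b - 2 := by omega
              subst ht2
              rw [rvalloc _ (by omega)]
              omega
            · have hj : 2 + t - T.a = T.b - T.a + 1 := by omega
              rw [hj, lval_tail 1]
              have ht2 : t = T.b - 1 := by omega
              subst ht2
              rw [hfinval (by omega)]
              exact ht1
        have := le_residuum (s := 2) (m := m) (by omega) hok2
        omega
    intro j hj hjm
    have h1 : residuum T m < m := by omega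
    have h2 := hmain h1
    have := sorted_getD_le tsort hj (by omega)
    omega
  exact ⟨hm, hab, hllen, hrlen, htlen, left_eq, tsort, troot_gt, rsplit, hfin_ge,
    hrle, hra, hrm, hr0, hr1, tail_gt_fin, hfin12, htype3⟩

end OrthoBij
namespace OrthoBij

open List

/-! ### Computation of the slide and of `hatR` -/

lemma maxRowOK_bdd (T : TwoCol) (e : ℕ) :
    BddAbove {ρ | ρ ≤ T.a + T.left.length - 1 ∧ (ρ < T.a ∨ T.left.getD (ρ - T.a) 0 ≤ e)} :=
  ⟨T.a + T.left.length - 1, fun _ hx => hx.1⟩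

lemma le_maxRowOK (T : TwoCol) {e ρ : ℕ} (h1 : ρ ≤ T.a + T.left.length - 1)
    (h2 : ρ < T.a ∨ T.left.getD (ρ - T.a) 0 ≤ e) : ρ ≤ maxRowOK T e :=
  le_csSup (maxRowOK_bdd T e) ⟨h1, h2⟩

lemma maxRowOK_le (T : TwoCol) {e n : ℕ}
    (hne : ∃ ρ, ρ ≤ T.a + T.left.length - 1 ∧ (ρ < T.a ∨ T.left.getD (ρ - T.a) 0 ≤ e))
    (h : ∀ ρ, ρ ≤ T.a + T.left.length - 1 → (ρ < T.a ∨ T.left.getD (ρ - T.a) 0 ≤ e) → ρ ≤ n) :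
    maxRowOK T e ≤ n := by
  apply csSup_le
  · obtain ⟨ρ, h1, h2⟩ := hne
    exact ⟨ρ, h1, h2⟩
  · rintro x ⟨h1, h2⟩
    exact h x h1 h2

lemma slideGo_nil (T : TwoCol) (bound : ℕ) : slideGo T [] bound = [] := by
  rw [slideGo]

lemma slideGo_cons (T : TwoCol) (e : ℕ) (rest : List ℕ) (bound : ℕ) :
    slideGo T (e :: rest) bound =
      min (maxRowOK T e) bound :: slideGo T rest (min (maxRowOK T e) bound - 1) := by
  rw [slideGo]

lemma reverse_getD {l : List ℕ} {j : ℕ} (hj : j < l.length) :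
    l.reverse.getD j 0 = l.getD (l.length - 1 - j) 0 := by
  rw [List.getD_eq_getElem _ _ (by simpa using hj), List.getElem_reverse,
    List.getD_eq_getElem _ _ (by omega)]

lemma slideGo_stack (T : TwoCol) : ∀ (es : List ℕ) (bound : ℕ), es.length ≤ bound + 1 →
    (∀ j, j < es.length → bound - j ≤ maxRowOK T (es.getD j 0)) →
    slideGo T es bound = (List.range' (bound + 1 - es.length) es.length).reverse := by
  intro es
  induction es with
  | nil => intro bound _ _; simp [slideGo_nil]
  | cons e rest ih =>
    intro bound hlen h
    have h0 : bound ≤ maxRowOK T e := by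
      have := h 0 (by simp)
      simpa using this
    have hmin : min (maxRowOK T e) bound = bound := by omega
    rw [slideGo_cons, hmin]
    rw [ih (bound - 1) (by simp at hlen ⊢; omega) (fun j hj => by
      have h2 := h (j+1) (by simp; omega)
      rw [List.getD_cons_succ] at h2
      have : bound - 1 - j = bound - (j + 1) := by omega
      rw [this]
      exact h2)]
    rcases Nat.eq_zero_or_pos bound with hb0 | hbpos
    · have : rest.length = 0 := by simp at hlen; omega
      rw [List.length_eq_zero_iff] at this
      subst this
      subst hb0
      simp
    · have hr : rest.length ≤ bound := by simp at hlen; omega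
      have hsplit : List.range' (bound - rest.length) (rest.length + 1) =
          List.range' (bound - rest.length) rest.length ++ [bound - rest.length + 1 * rest.length] :=
        List.range'_concat
      rw [List.length_cons,
        show bound + 1 - (rest.length + 1) = bound - rest.length from by omega,
        hsplit, List.reverse_append,
        show bound - rest.length + 1 * rest.length = bound from by omega,
        show bound - 1 + 1 - rest.length = bound - rest.length from by omega]
      simp

lemma slideRows_eq {m : ℕ} {T : TwoCol} (c : Canon m T) :
    slideRows T = (List.range' (residuum T m) T.b).reverse := by
  have hra := c.hra
  have hrm := c.hrm
  have hr := c.hr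
  have hab := c.hab
  have hm := c.hm
  unfold slideRows
  rcases c.rsplit with hrr | ⟨hb0, hre⟩
  swap
  · rw [hre, hb0]
    simp [slideGo_nil]
  have hb1 : 1 ≤ T.b := by
    by_contra hb
    have hlen0 : T.right.length = 0 := by rw [c.rlen]; omega
    rw [List.length_eq_zero_iff] at hlen0
    rw [hlen0] at hrr
    simp at hrr
  -- maxRowOK of the fin
  have hfinmem : (T.b + residuum T m - 1) ≤ T.a + T.left.length - 1 ∧
      ((T.b + residuum T m - 1) < T.a ∨
        T.left.getD ((T.b + residuum T m - 1) - T.a) 0 ≤ finOf T) := by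
    constructor
    · rw [c.llen]; omega
    · rcases Nat.lt_or_ge (T.b + residuum T m - 1) T.a with hlt | hge
      · exact Or.inl hlt
      · right
        rcases Nat.eq_zero_or_pos (residuum T m) with hr0 | hr1
        · rcases Nat.eq_or_lt_of_le hab with heq | hlt2
          · omega
          · have hu : T.b + residuum T m - 1 - T.a < T.b - T.a := by omega
            rw [c.lval hu]
            have := c.hfin_ge
            omega
        · have hres1 : residuum T m = 1 := by omega
          have := (c.hr1 hres1).1
          have htroot := (c.hr1 hres1).2
          have hu : T.b + residuum T m - 1 - T.a = T.b - T.a + 0 := by omega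
          rw [hu, c.lval_tail 0]
          have := c.hfin_ge
          omega
  have hfinmax : maxRowOK T (finOf T) = T.b + residuum T m - 1 := by
    apply _root_.le_antisymm
    · apply maxRowOK_le T ⟨_, hfinmem⟩
      intro ρ h1 h2
      by_contra hc
      have hge : T.b + residuum T m ≤ ρ := by omega
      have hge2 : T.a ≤ ρ := by omega
      rcases h2 with h2 | h2
      · omega
      · have hj : ρ - T.a = T.b - T.a + (ρ - T.b) := by omega
        rw [hj, c.lval_tail] at h2
        have hlt := c.tail_gt_fin (ρ - T.b) (by omega) (by rw [c.llen] at h1; omega)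
        omega
    · exact le_maxRowOK T hfinmem.1 hfinmem.2
  rw [hrr]
  rw [show (List.range' 1 (T.b - 1) ++ [finOf T]).reverse
      = finOf T :: (List.range' 1 (T.b - 1)).reverse by simp]
  rw [slideGo_cons, hfinmax]
  have hbound : T.a + T.left.length - 1 = T.b + m - 1 := by rw [c.llen]; omega
  rw [hbound]
  have hmin : min (T.b + residuum T m - 1) (T.b + m - 1) = T.b + residuum T m - 1 := by omega
  rw [hmin]
  rw [slideGo_stack T _ (T.b + residuum T m - 1 - 1)
    (by simp [List.length_range']; omega)
    (fun j hj => by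
      rw [List.length_reverse, List.length_range'] at hj
      rw [reverse_getD (by rw [List.length_range']; omega), List.length_range',
        List.getD_eq_getElem _ _ (by rw [List.length_range']; omega), List.getElem_range']
      apply le_maxRowOK
      · rw [c.llen]; omega
      · rcases Nat.lt_or_ge (T.b + residuum T m - 1 - 1 - j) T.a with hlt | hge
        · exact Or.inl hlt
        · right
          have hu : T.b + residuum T m - 1 - 1 - j - T.a < T.b - T.a := by omega
          rw [c.lval hu]
          omega)]
  rw [List.length_reverse, List.length_range']
  rcases Nat.eq_or_lt_of_le hb1 with hb1' | hb2
  · rw [← hb1']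
    simp [List.range'_one]
  · rw [show T.b + residuum T m - 1 - 1 + 1 - (T.b - 1) = residuum T m by omega]
    rw [show List.range' (residuum T m) T.b =
    List.range' (residuum T m) (T.b - 1) ++ [T.b + residuum T m - 1] by
        have h2 : List.range' (residuum T m) (T.b - 1 + 1) =
            List.range' (residuum T m) (T.b - 1) ++ [residuum T m + 1 * (T.b - 1)] :=
          List.range'_concat
        rw [show T.b - 1 + 1 = T.b by omega, show residuum T m + 1 * (T.b-1) = T.b + residuum T m - 1 by omega] at h2
        exact h2]
    simp

lemma zip_reverse' : ∀ (l1 l2 : List ℕ), l1.length = l2.length →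
    l1.reverse.zip l2.reverse = (l1.zip l2).reverse := by
  intro l1
  induction l1 with
  | nil =>
    intro l2 h
    have h2 : l2.length = 0 := by simpa using h.symm
    rw [List.length_eq_zero_iff] at h2
    subst h2
    rfl
  | cons a t1 ih =>
    intro l2 h
    cases l2 with
    | nil => simp at h
    | cons b t2 =>
      have h' : t1.length = t2.length := by simpa using h
      rw [List.reverse_cons, List.reverse_cons, List.zip_append (by simp [h']), ih t2 h']
      simp

lemma filter_range_ge (n c : ℕ) (hc : c ≤ n) :
    (List.range n).filter (fun u => decide (c ≤ u)) = List.range' c (n - c) := by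
  rw [List.range_eq_range']
  rw [show List.range' 0 n = List.range' 0 c ++ List.range' c (n - c) by
    have := List.range'_append (s := 0) (m := c) (n := n - c) (step := 1)
    rw [show 0 + 1 * c = c by omega, show c + (n - c) = n by omega] at this
    exact this.symm]
  rw [List.filter_append]
  rw [List.filter_eq_nil_iff.2 (by
    intro u hu
    simp [List.mem_range'] at hu ⊢
    omega)]
  rw [List.filter_eq_self.2 (by
    intro u hu
    simp [List.mem_range'] at hu ⊢
    omega)]
  simp

lemma hatR_eq {m : ℕ} {T : TwoCol} (c : Canon m T) :
    hatR T = T.right ++ (tailOf T).drop (residuum T m) := by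
  have hra := c.hra
  have hrm := c.hrm
  have hab := c.hab
  unfold hatR
  have hsr := slideRows_eq c
  -- the unmatched left cells
  have hfilter : (List.range T.left.length).filter
      (fun u => decide ((T.a + u) ∉ slideRows T)) =
      List.range' (T.b - T.a + residuum T m) (m - residuum T m) := by
    have hcongr : (List.range T.left.length).filter
        (fun u => decide ((T.a + u) ∉ slideRows T)) =
        (List.range T.left.length).filter (fun u => decide (T.b - T.a + residuum T m ≤ u)) := by
      apply List.filter_congr
      intro u _
      have : ((T.a + u) ∉ slideRows T) ↔ (T.b - T.a + residuum T m ≤ u) := by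
        rw [hsr]
        rw [List.mem_reverse, List.mem_range'_1]
        omega
      simp [this]
    rw [hcongr, c.llen, filter_range_ge _ _ (by omega)]
    congr 1
    omega
  rw [hfilter]
  have hmap : (List.range' (T.b - T.a + residuum T m) (m - residuum T m)).map
      (fun u => (T.a + u, T.left.getD u 0)) =
      (List.range' (T.b + residuum T m) (m - residuum T m)).zip
        ((tailOf T).drop (residuum T m)) := by
    apply List.ext_getElem
    · simp [c.tlen]
    · intro i h1 h2
      rw [List.length_map, List.length_range'] at h1
      rw [List.getElem_map, List.getElem_zip,
        @List.getElem_range' (T.b - T.a + residuum T m) (m - residuum T m) 1 i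
          (by rw [List.length_range']; omega),
        @List.getElem_range' (T.b + residuum T m) (m - residuum T m) 1 i
          (by rw [List.length_range']; omega)]
      have he3 : ((tailOf T).drop (residuum T m))[i]'(by
          rw [List.length_drop, c.tlen]; omega) = (tailOf T).getD (residuum T m + i) 0 := by
        rw [List.getElem_drop, List.getD_eq_getElem _ _ (by rw [c.tlen]; omega)]
      rw [he3]
      have he1 : T.a + (T.b - T.a + residuum T m + 1 * i) = T.b + residuum T m + 1 * i := by
        omega
      rw [he1]
      have he2 : T.left.getD (T.b - T.a + residuum T m + 1 * i) 0 =
          (tailOf T).getD (residuum T m + i) 0 := by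
        rw [show T.b - T.a + residuum T m + 1 * i = T.b - T.a + (residuum T m + i) by omega,
          c.lval_tail]
      rw [he2]
  rw [hmap, hsr]
  have hzipped : (List.range' (residuum T m) T.b).reverse.zip T.right.reverse =
      ((List.range' (residuum T m) T.b).zip T.right).reverse := by
    apply zip_reverse'
    rw [List.length_range', c.rlen]
  rw [hzipped]
  set Z := (List.range' (residuum T m) T.b).zip T.right ++
    (List.range' (T.b + residuum T m) (m - residuum T m)).zip ((tailOf T).drop (residuum T m))
    with hZ
  have hperm : ((List.range' (residuum T m) T.b).zip T.right).reverse ++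
      (List.range' (T.b + residuum T m) (m - residuum T m)).zip
        ((tailOf T).drop (residuum T m)) ~ Z := by
    rw [hZ]
    exact (List.reverse_perm _).append_right _
  have hpair : Z.Pairwise (fun p q => p.1 < q.1) := by
    have hfst : Z.map Prod.fst = List.range' (residuum T m) (T.b + (m - residuum T m)) := by
      rw [hZ, List.map_append, List.map_fst_zip (by rw [List.length_range', c.rlen]),
        List.map_fst_zip (by rw [List.length_range', List.length_drop, c.tlen])]
      have := List.range'_append (s := residuum T m) (m := T.b) (n := m - residuum T m) (step := 1)
      rw [show residuum T m + 1 * T.b = T.b + residuum T m by omega] at this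
      rw [this]
    have hpw : (Z.map Prod.fst).Pairwise (· < ·) := by
      rw [hfst]
      exact List.pairwise_lt_range'
    rw [List.pairwise_map] at hpw
    exact hpw
  rw [sortByRow_eq _ Z hpair hperm, hZ, List.map_append,
    List.map_snd_zip (by rw [List.length_range', c.rlen]),
    List.map_snd_zip (by rw [List.length_range', List.length_drop, c.tlen])]

end OrthoBij
namespace OrthoBij

open List

/-! ### Computation of `starL` -/

lemma minRowOK_eq {T : TwoCol} {e σ0 : ℕ}
    (hmem : T.right.length ≤ σ0 ∨ e ≤ T.right.getD σ0 0)
    (hmin : ∀ σ, σ < σ0 → ¬ (T.right.length ≤ σ ∨ e ≤ T.right.getD σ 0)) :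
    minRowOK T e = σ0 := by
  unfold minRowOK
  apply _root_.le_antisymm (Nat.sInf_le hmem)
  by_contra hc
  push_neg at hc
  have hm := Nat.sInf_mem (⟨σ0, hmem⟩ :
    Set.Nonempty {σ | T.right.length ≤ σ ∨ e ≤ T.right.getD σ 0})
  exact hmin _ hc hm

lemma upGo_nil (T : TwoCol) (low : ℕ) : upGo T [] low = [] := by rw [upGo]

lemma upGo_cons (T : TwoCol) (e : ℕ) (rest : List ℕ) (low : ℕ) :
    upGo T (e :: rest) low =
      max (minRowOK T e) low :: upGo T rest (max (minRowOK T e) low + 1) := by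
  rw [upGo]

lemma range'_succ' (s n : ℕ) : List.range' s (n + 1) = s :: List.range' (s + 1) n := by
  simp [List.range'_succ]

lemma upGo_const (T : TwoCol) : ∀ (es : List ℕ) (c low : ℕ), c ≤ low →
    (∀ x ∈ es, minRowOK T x = c) → upGo T es low = List.range' low es.length := by
  intro es
  induction es with
  | nil => intro c low _ _; rw [upGo_nil]; rfl
  | cons e rest ih =>
    intro c low hc h
    rw [upGo_cons, h e (by simp)]
    have hmax : max c low = low := by omega
    rw [hmax, ih c (low + 1) (by omega) (fun x hx => h x (by simp [hx]))]
    rw [List.length_cons, range'_succ']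

lemma upGo_concat (T : TwoCol) : ∀ (es ys : List ℕ) (low c : ℕ), low ≤ c →
    1 ≤ es.length →
    (∀ j, j < es.length → minRowOK T (es.getD j 0) = c + j) →
    upGo T (es ++ ys) low = List.range' c es.length ++ upGo T ys (c + es.length) := by
  intro es
  induction es with
  | nil => intro ys low c _ h _; simp at h
  | cons e rest ih =>
    intro ys low c hlow _ h
    have h0 : minRowOK T e = c := by
      have := h 0 (by simp)
      simpa using this
    rw [List.cons_append, upGo_cons, h0]
    have hmax : max c low = c := by omega
    rw [hmax]
    cases rest with
    | nil =>
      simp [range'_succ']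
    | cons e2 rest2 =>
      rw [ih ys (c+1) (c+1) (le_refl _) (by simp) (fun j hj => by
        have := h (j+1) (by simp; simp at hj; omega)
        rw [List.getD_cons_succ] at this
        rw [this]
        omega)]
      simp only [List.cons_append, List.length_cons]
      have harg : c + 1 + (rest2.length + 1) = c + (rest2.length + 1 + 1) := by omega
      rw [harg, range'_succ' c (rest2.length + 1), range'_succ' (c + 1) rest2.length]
      simp

/-- decomposition of the left column when the residuum is 1 -/
lemma Canon.left_split1 {p : ℕ} {U : TwoCol} (c : Canon p U) (h1 : residuum U p = 1) :
    U.left = List.range' 1 (U.b - U.a + 1) ++ lowerTail U := by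
  have htlen := c.tlen
  have hm := c.hm
  have htake : (tailOf U).take 1 = [(tailOf U).getD 0 0] := by
    cases htl : tailOf U with
    | nil => rw [htl] at htlen; simp at htlen; omega
    | cons a t => simp
  have htroot := (c.hr1 h1).2
  rw [c.left_eq]
  conv_lhs => rw [← List.take_append_drop 1 (tailOf U)]
  rw [htake, htroot, ← List.append_assoc, c.lowerTail_eq]
  congr 1
  rw [range'_one_split (U.b - U.a + 1) (by omega)]
  simp

lemma lowerTail_len {p : ℕ} {U : TwoCol} (c : Canon p U) :
    (lowerTail U).length = p - 1 := by
  rw [c.lowerTail_eq, List.length_drop, c.tlen]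

lemma upRows_eq {p : ℕ} {U : TwoCol} (c : Canon p U) (h1 : residuum U p = 1) :
    upRows U = List.range' 0 (U.b - U.a + 1) ++ List.range' U.b (p - 1) := by
  have hA2 := (c.hr1 h1).1
  have hab := c.hab
  have hm := c.hm
  have hB2 : 2 ≤ U.b := by omega
  -- minRowOK for the initial segment
  have hmin1 : ∀ u, u < U.b - U.a + 1 → minRowOK U (u + 1) = u := by
    intro u hu
    apply minRowOK_eq
    · right
      rw [c.rval (by omega)]
    · intro σ hσ
      push_neg
      constructor
      · rw [c.rlen]; omega
      · rw [c.rval (by omega)]; omega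
  -- minRowOK for lower-tail entries
  have hmin2 : ∀ x ∈ lowerTail U, minRowOK U x = U.b := by
    intro x hx
    rw [c.lowerTail_eq] at hx
    rw [mem_iff_getD] at hx
    obtain ⟨j, hj, hxe⟩ := hx
    rw [List.length_drop, c.tlen] at hj
    rw [getD_drop'] at hxe
    have hgt : finOf U < x := by
      rw [← hxe]
      exact c.tail_gt_fin (1 + j) (by omega) (by omega)
    have hfge := c.hfin_ge
    apply minRowOK_eq
    · left; rw [c.rlen]
    · intro σ hσ
      push_neg
      constructor
      · rw [c.rlen]; omega
      · rcases Nat.lt_or_ge σ (U.b - 1) with h | h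
        · rw [c.rval h]
          have : finOf U < x := hgt
          omega
        · have : σ = U.b - 1 := by omega
          subst this
          rw [c.rval_fin (by omega)]
          omega
  unfold upRows
  rw [c.left_split1 h1]
  rw [upGo_concat U _ _ 0 0 (le_refl _) (by rw [List.length_range']; omega) (fun j hj => by
    rw [List.length_range'] at hj
    rw [List.getD_eq_getElem _ _ (by rw [List.length_range']; omega),
      @List.getElem_range' 1 (U.b - U.a + 1) 1 j (by rw [List.length_range']; omega)]
    rw [show 1 + 1 * j = j + 1 by omega]
    rw [hmin1 j hj]
    omega)]
  rw [List.length_range']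
  congr 1
  rw [show (0 : ℕ) + (U.b - U.a + 1) = U.b - U.a + 1 by omega]
  cases hlt : lowerTail U with
  | nil =>
    have := lowerTail_len c
    rw [hlt] at this
    simp at this
    rw [upGo_nil]
    rw [show p - 1 = 0 by omega]
    rfl
  | cons e lt2 =>
    have hlen := lowerTail_len c
    rw [hlt] at hlen
    simp at hlen
    rw [upGo_cons, hmin2 e (by rw [hlt]; simp)]
    have hmax : max U.b (U.b - U.a + 1) = U.b := by omega
    rw [hmax]
    rw [upGo_const U lt2 U.b (U.b + 1) (by omega)
      (fun x hx => hmin2 x (by rw [hlt]; simp [hx]))]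
    rw [show p - 1 = lt2.length + 1 by omega, range'_succ']

lemma starIdx_eq {p : ℕ} {U : TwoCol} (c : Canon p U) (h1 : residuum U p = 1) :
    starIdx U = U.b - 1 := by
  have hA2 := (c.hr1 h1).1
  have hab := c.hab
  have hB2 : 2 ≤ U.b := by omega
  have hup := upRows_eq c h1
  unfold starIdx
  apply _root_.le_antisymm
  · apply csSup_le
    · refine ⟨U.b - 1, ?_⟩
      constructor
      · rw [c.rlen]; omega
      · rw [hup]
        simp only [List.mem_append, List.mem_range'_1]
        push_neg
        constructor <;> intro h <;> omega
    · rintro x ⟨hx1, _⟩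
      rw [c.rlen] at hx1
      omega
  · apply le_csSup ⟨U.right.length, fun x hx => le_of_lt hx.1⟩
    constructor
    · rw [c.rlen]; omega
    · rw [hup]
      simp only [List.mem_append, List.mem_range'_1]
      push_neg
      constructor <;> intro h <;> omega

lemma starL_eq {p : ℕ} {U : TwoCol} (c : Canon p U) (h1 : residuum U p = 1) :
    starL U = List.range' 1 (U.b - U.a + 1) ++ [finOf U] ++ lowerTail U := by
  have hA2 := (c.hr1 h1).1
  have hab := c.hab
  have hB2 : 2 ≤ U.b := by omega
  have hm := c.hm
  have hltl := lowerTail_len c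
  unfold starL
  rw [starIdx_eq c h1, upRows_eq c h1, c.left_split1 h1,
    List.zip_append (by rw [List.length_range', List.length_range']),
    c.rval_fin (by omega)]
  set z1 := (List.range' 0 (U.b - U.a + 1)).zip (List.range' 1 (U.b - U.a + 1)) with hz1
  set z2 := (List.range' U.b (p - 1)).zip (lowerTail U) with hz2
  set Z := z1 ++ [(U.b - 1, finOf U)] ++ z2 with hZ
  have hperm : z1 ++ z2 ++ [(U.b - 1, finOf U)] ~ Z := by
    rw [hZ, List.append_assoc, List.append_assoc]
    apply List.Perm.append_left
    exact List.perm_append_singleton _ _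
  have hpair : Z.Pairwise (fun pq qq => pq.1 < qq.1) := by
    have hfst : Z.map Prod.fst =
        List.range' 0 (U.b - U.a + 1) ++ [U.b - 1] ++ List.range' U.b (p - 1) := by
      rw [hZ, List.map_append, List.map_append, hz1, hz2,
        List.map_fst_zip (by rw [List.length_range', List.length_range']),
        List.map_fst_zip (by rw [List.length_range', hltl])]
      rfl
    have hpw : (Z.map Prod.fst).Pairwise (· < ·) := by
      rw [hfst]
      rw [List.pairwise_append]
      refine ⟨?_, ?_, ?_⟩
      · rw [List.pairwise_append]
        refine ⟨List.pairwise_lt_range', by simp, ?_⟩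
        intro x hx y hy
        rw [List.mem_range'_1] at hx
        simp at hy
        omega
      · exact List.pairwise_lt_range'
      · intro x hx y hy
        rw [List.mem_append] at hx
        rw [List.mem_range'_1] at hy
        rcases hx with hx | hx
        · rw [List.mem_range'_1] at hx
          omega
        · simp at hx
          omega
    rw [List.pairwise_map] at hpw
    exact hpw
  rw [sortByRow_eq _ Z hpair hperm, hZ, List.map_append, List.map_append, hz1, hz2,
    List.map_snd_zip (by rw [List.length_range', List.length_range']),
    List.map_snd_zip (by rw [List.length_range', hltl])]
  rfl

end OrthoBij
namespace OrthoBij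

open List

/-! ### Bottom-entry evaluations -/

namespace Canon

variable {m : ℕ} {T : TwoCol}

lemma hatR_len (c : Canon m T) : (hatR T).length = T.b + (m - residuum T m) := by
  rw [hatR_eq c, List.length_append, c.rlen, List.length_drop, c.tlen]

lemma botGet_hatR_tail (c : Canon m T) {i : ℕ} (h1 : 1 ≤ i) (h2 : i ≤ m - residuum T m) :
    botGet (hatR T) i = (tailOf T).getD (m - i) 0 := by
  rw [hatR_eq c, botGet_tailpart _ _ _ h1 (by rw [List.length_drop, c.tlen]; omega),
    List.length_drop, c.tlen, getD_drop']
  congr 1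
  have := c.hrm
  omega

lemma botGet_hatR_right (c : Canon m T) {j : ℕ} (h1 : 1 ≤ j) (h2 : j ≤ T.b) :
    botGet (hatR T) (m - residuum T m + j) = botGet T.right j := by
  rw [hatR_eq c, botGet_append_left _ _ _
    (by rw [List.length_drop, c.tlen]; omega)
    (by rw [List.length_drop, c.tlen, c.rlen]; omega)]
  congr 1
  rw [List.length_drop, c.tlen]
  omega

lemma botGet_right_val (c : Canon m T) {j : ℕ} (h1 : 2 ≤ j) (h2 : j ≤ T.b) :
    botGet T.right j = T.b + 1 - j := by
  rcases c.rsplit with hrr | ⟨hb0, _⟩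
  · rw [hrr, botGet_append_left _ _ _ (by simp; omega) (by simp [List.length_range']; omega),
      botGet_range' _ _ (by simp; omega) (by simp; omega)]
    simp
    omega
  · omega

lemma botGet_right_all (c : Canon m T) (hfb : finOf T = T.b) {j : ℕ} (h1 : 1 ≤ j)
    (h2 : j ≤ T.b) : botGet T.right j = T.b + 1 - j := by
  rcases Nat.lt_or_ge j 2 with h | h
  · have : j = 1 := by omega
    subst this
    show finOf T = T.b + 1 - 1
    omega
  · exact c.botGet_right_val h h2

lemma botGet_left_tail (c : Canon m T) {i : ℕ} (h1 : 1 ≤ i) (h2 : i ≤ m) :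
    botGet T.left i = (tailOf T).getD (m - i) 0 := by
  rw [c.left_eq, botGet_tailpart _ _ _ h1 (by rw [c.tlen]; omega), c.tlen]

lemma botGet_left_range (c : Canon m T) {j : ℕ} (h1 : 1 ≤ j) (h2 : j ≤ T.b - T.a) :
    botGet T.left (m + j) = T.b - T.a + 1 - j := by
  rw [c.left_eq, botGet_append_left _ _ _ (by rw [c.tlen]; omega)
      (by rw [c.tlen, List.length_range']; omega), c.tlen,
    botGet_range' _ _ (by omega) (by omega)]
  congr 1
  omega

lemma starL_len (c : Canon m T) (h1 : residuum T m = 1) :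
    (starL T).length = T.b - T.a + m + 1 := by
  rw [starL_eq c h1, List.length_append, List.length_append, List.length_range',
    lowerTail_len c]
  have := c.hm
  simp
  omega

lemma botGet_starL_tail (c : Canon m T) (hr1 : residuum T m = 1) {i : ℕ} (h1 : 1 ≤ i)
    (h2 : i ≤ m - 1) : botGet (starL T) i = (tailOf T).getD (m - i) 0 := by
  rw [starL_eq c hr1, botGet_tailpart _ _ _ h1 (by rw [lowerTail_len c]; omega),
    lowerTail_len c, c.lowerTail_eq, getD_drop']
  congr 1
  omega

lemma botGet_starL_fin (c : Canon m T) (hr1 : residuum T m = 1) :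
    botGet (starL T) m = finOf T := by
  have hm := c.hm
  rw [starL_eq c hr1, botGet_append_left _ _ _ (by rw [lowerTail_len c]; omega)
    (by rw [lowerTail_len c]; simp [List.length_range']; omega)]
  rw [lowerTail_len c, show m - (m - 1) = 1 by omega,
    botGet_tailpart _ _ _ (by omega) (by simp)]
  simp [botGet]

lemma botGet_starL_range (c : Canon m T) (hr1 : residuum T m = 1) {j : ℕ} (h1 : 1 ≤ j)
    (h2 : j ≤ T.b - T.a + 1) : botGet (starL T) (m + j) = T.b - T.a + 2 - j := by
  have hm := c.hm
  rw [starL_eq c hr1, botGet_append_left _ _ _ (by rw [lowerTail_len c]; omega)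
    (by rw [lowerTail_len c]; simp [List.length_range']; omega),
    lowerTail_len c, show m + j - (m - 1) = j + 1 by omega,
    botGet_append_left _ _ _ (by simp; omega) (by simp [List.length_range']; omega)]
  rw [List.length_singleton, show j + 1 - 1 = j by omega,
    botGet_range' _ _ (by omega) (by omega)]

end Canon

end OrthoBij
namespace OrthoBij

open List

/-- (A2) for a pair is equivalent to the tail comparison. -/
theorem pair_equiv (m p : ℕ) (hp : 1 ≤ p) (hpm : p ≤ m) (T U : TwoCol)
    (hT : IsTwoCol m T) (hU : IsTwoCol p U)
    (htT : Type1 m T ∨ Type2 m T ∨ Type3 m T) (htU : Type1 p U ∨ Type2 p U ∨ Type3 p U)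
    (hH : T.b ≤ U.b - U.a + 2 * residuum T m * residuum U p)
    (h3 : Type3 m T → residuum U p = 1 ∧ finOf T ≤ finOf U) :
    CondA2pair m p T U ↔ ∀ t, t < p → (tailOf T).getD t 0 ≤ (tailOf U).getD t 0 := by
  have cT := mkCanon (le_trans hp hpm) hT htT
  have cU := mkCanon hp hU htU
  have hrT1 : residuum T m ≤ 1 := cT.hr
  have hrU1 : residuum U p ≤ 1 := cU.hr
  have hlenU : U.left.length = U.b - U.a + p := cU.llen
  have hhatlen := cT.hatR_len
  have habU := cU.hab
  have habT := cT.hab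
  constructor
  · -- (A2) implies tail comparison
    intro hA2 t ht
    by_cases hrT0 : residuum T m = 0
    · have hprod : residuum T m * residuum U p = 0 := by rw [hrT0]; ring
      have happ := hA2.1 hprod (p - t) (by omega) (by rw [hhatlen]; omega)
      have hidx : p - t + m - p = m - t := by omega
      rw [hidx] at happ
      have hL := cT.botGet_hatR_tail (i := m - t) (by omega) (by omega)
      have hR := cU.botGet_left_tail (i := p - t) (by omega) (by omega)
      rw [hL, hR, show m - (m - t) = t by omega, show p - (p - t) = t by omega] at happ
      exact happ.2
    · have hrT1' : residuum T m = 1 := by omega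
      rcases Nat.eq_zero_or_pos t with ht0 | htpos
      · subst ht0
        have htrT := (cT.hr1 hrT1').2
        have haT2 := (cT.hr1 hrT1').1
        by_cases hrU0 : residuum U p = 0
        · have htrU := cU.hr0 hrU0
          have hprod2 : 2 * residuum T m * residuum U p = 0 := by rw [hrU0]; ring
          rw [hprod2] at hH
          omega
        · have hrU1' : residuum U p = 1 := by omega
          have htrU := (cU.hr1 hrU1').2
          have hprod2 : 2 * residuum T m * residuum U p = 2 := by rw [hrT1', hrU1']
          rw [hprod2] at hH
          omega
      · by_cases hrU0 : residuum U p = 0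
        · have hprod : residuum T m * residuum U p = 0 := by rw [hrU0]; ring
          have happ := hA2.1 hprod (p - t) (by omega) (by rw [hhatlen]; omega)
          have hidx : p - t + m - p = m - t := by omega
          rw [hidx] at happ
          have hL := cT.botGet_hatR_tail (i := m - t) (by omega) (by omega)
          have hR := cU.botGet_left_tail (i := p - t) (by omega) (by omega)
          rw [hL, hR, show m - (m - t) = t by omega, show p - (p - t) = t by omega] at happ
          exact happ.2
        · have hrU1' : residuum U p = 1 := by omega
          have hprod : residuum T m * residuum U p = 1 := by rw [hrT1', hrU1']
          have happ := hA2.2 hprod (p - t) (by omega) (by rw [hhatlen]; omega)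
          have hidx : p - t + m - p = m - t := by omega
          rw [hidx] at happ
          have hL := cT.botGet_hatR_tail (i := m - t) (by omega) (by omega)
          have hR := cU.botGet_starL_tail hrU1' (i := p - t) (by omega) (by omega)
          rw [hL, hR, show m - (m - t) = t by omega, show p - (p - t) = t by omega] at happ
          exact happ.2
  · -- tail comparison implies (A2)
    intro hT2
    constructor
    · -- product 0 clause
      intro hprod i h1 h2
      have hprod2 : 2 * residuum T m * residuum U p = 0 := by
        rw [mul_assoc, hprod, mul_zero]
      rw [hprod2] at hH
      rw [hhatlen] at h2
      by_cases hrT0 : residuum T m = 0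
      · have htype1 : Type1 m T := by
          rcases htT with h' | h' | h'
          · exact h'
          · rw [h'.1] at hrT0; omega
          · rw [h'.1] at hrT0; omega
        have hfb : finOf T = T.b := cT.hfin12 (Or.inl htype1)
        rw [hrT0] at h2
        rcases Nat.lt_or_ge p i with hig | hile
        · have hj1 : 1 ≤ i - p := by omega
          have hj2 : i - p ≤ T.b := by omega
          refine ⟨by omega, ?_⟩
          have hL := cT.botGet_hatR_right (j := i - p) hj1 hj2
          rw [hrT0, show m - 0 + (i - p) = i + m - p by omega] at hL
          rw [hL, cT.botGet_right_all hfb hj1 hj2]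
          have hR := cU.botGet_left_range (j := i - p) hj1 (by omega)
          rw [show p + (i - p) = i by omega] at hR
          rw [hR]
          omega
        · refine ⟨by omega, ?_⟩
          have hL := cT.botGet_hatR_tail (i := i + m - p) (by omega) (by omega)
          have hR := cU.botGet_left_tail (i := i) h1 hile
          rw [hL, hR, show m - (i + m - p) = p - i by omega]
          exact hT2 (p - i) (by omega)
      · have hrT1' : residuum T m = 1 := by omega
        have hrU0 : residuum U p = 0 := by
          rcases Nat.eq_zero_or_pos (residuum U p) with h' | h'
          · exact h'
          · exfalso
            rw [hrT1'] at hprod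
            omega
        have htype2 : Type2 m T := by
          rcases htT with h' | h' | h'
          · rw [h'.1] at hrT1'; omega
          · exact h'
          · have := (h3 h').1
            omega
        have hfb : finOf T = T.b := cT.hfin12 (Or.inr htype2)
        have htrootU := cU.hr0 hrU0
        rw [hrT1'] at h2
        have hble : i ≤ T.b + p - 1 := by omega
        rcases lt_trichotomy i p with hlt | heq | hgt
        · refine ⟨by omega, ?_⟩
          have hL := cT.botGet_hatR_tail (i := i + m - p) (by omega) (by rw [hrT1']; omega)
          have hR := cU.botGet_left_tail (i := i) h1 (by omega)
          rw [hL, hR, show m - (i + m - p) = p - i by omega]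
          exact hT2 (p - i) (by omega)
        · refine ⟨by omega, ?_⟩
          have hbpos : 1 ≤ T.b := by
            have := (cT.hr1 hrT1').1
            omega
          have hL := cT.botGet_hatR_right (j := 1) (by omega) hbpos
          rw [hrT1', show m - 1 + 1 = i + m - p by omega] at hL
          rw [hL, cT.botGet_right_all hfb (by omega) hbpos]
          have hR := cU.botGet_left_tail (i := i) (by omega) (by omega)
          rw [hR, show p - i = 0 by omega]
          omega
        · have hj1 : 1 ≤ i - p := by omega
          have hj2 : i - p ≤ T.b - 1 := by omega
          refine ⟨by omega, ?_⟩
          have hL := cT.botGet_hatR_right (j := i - p + 1) (by omega) (by omega)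
          rw [hrT1', show m - 1 + (i - p + 1) = i + m - p by omega] at hL
          rw [hL, cT.botGet_right_val (by omega) (by omega)]
          have hR := cU.botGet_left_range (j := i - p) hj1 (by omega)
          rw [show p + (i - p) = i by omega] at hR
          rw [hR]
          omega
    · -- product 1 clause
      intro hprod i h1 h2
      have hrT1' : residuum T m = 1 := by
        rcases Nat.eq_zero_or_pos (residuum T m) with h' | h'
        · rw [h'] at hprod; simp at hprod
        · omega
      have hrU1' : residuum U p = 1 := by
        rw [hrT1'] at hprod
        simpa using hprod
      have hprod2 : 2 * residuum T m * residuum U p = 2 := by rw [hrT1', hrU1']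
      rw [hprod2] at hH
      have haT2 := (cT.hr1 hrT1').1
      have haU2 := (cU.hr1 hrU1').1
      have htrootU := (cU.hr1 hrU1').2
      have hbT2 : 2 ≤ T.b := by omega
      have hbU2 : 2 ≤ U.b := by omega
      have hstarlen := cU.starL_len hrU1'
      rw [hhatlen, hrT1'] at h2
      have hble : i ≤ T.b + p - 1 := by omega
      rcases lt_trichotomy i p with hlt | heq | hgt
      · refine ⟨by omega, ?_⟩
        have hL := cT.botGet_hatR_tail (i := i + m - p) (by omega) (by rw [hrT1']; omega)
        have hR := cU.botGet_starL_tail hrU1' (i := i) h1 (by omega)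
        rw [hL, hR, show m - (i + m - p) = p - i by omega]
        exact hT2 (p - i) (by omega)
      · refine ⟨by omega, ?_⟩
        have hL := cT.botGet_hatR_right (j := 1) (by omega) (by omega)
        rw [hrT1', show m - 1 + 1 = i + m - p by omega] at hL
        rw [hL, heq]
        have hR := cU.botGet_starL_fin hrU1'
        rw [hR]
        show finOf T ≤ finOf U
        rcases htT with h' | h' | h'
        · rw [h'.1] at hrT1'; omega
        · have hfb : finOf T = T.b := cT.hfin12 (Or.inr h')
          have := cU.hfin_ge
          omega
        · exact (h3 h').2
      · have hj1 : 1 ≤ i - p := by omega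
        have hj2 : i - p ≤ T.b - 1 := by omega
        refine ⟨by omega, ?_⟩
        have hL := cT.botGet_hatR_right (j := i - p + 1) (by omega) (by omega)
        rw [hrT1', show m - 1 + (i - p + 1) = i + m - p by omega] at hL
        rw [hL, cT.botGet_right_val (by omega) (by omega)]
        have hR := cU.botGet_starL_range hrU1' (j := i - p) hj1 (by omega)
        rw [show p + (i - p) = i by omega] at hR
        rw [hR]
        omega

end OrthoBij
namespace OrthoBij

open List

/-- (A2') for the last pair is equivalent to the tail-root condition. -/
theorem spair_equiv (m : ℕ) (hm : 1 ≤ m) (T : TwoCol) (S : RectCols) (cc : ℕ)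
    (hT : IsTwoCol m T) (htT : Type1 m T ∨ Type2 m T ∨ Type3 m T)
    (hrect : IsRect cc S) (hcc : 1 ≤ cc)
    (hSnogap : ∀ col ∈ S.cols, ∀ x, ¬ IsGapIn col x)
    (hH'even : SEven S → T.b ≤ (SL S).length)
    (hH'odd : ¬ SEven S → T.b ≤ (SL S).length - 1 + 2 * residuum T m)
    (h3 : Type3 m T → ¬ SEven S) :
    CondA2'pair m T S ↔ (Type1 m T → ¬ SEven S → tailRoot T ≤ botGet (SL S) 1) := by
  have cT := mkCanon hm hT htT
  have hhatlen := cT.hatR_len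
  have hrT1 : residuum T m ≤ 1 := cT.hr
  have hSLmem : SL S ∈ S.cols := by
    unfold SL
    rw [List.getD_eq_getElem _ _ (by rw [hrect.1]; omega)]
    exact List.getElem_mem _
  have hSLsorted := (hrect.2.1 _ hSLmem).1
  have hSLpos := (hrect.2.1 _ hSLmem).2
  have hSLcanon : SL S = List.range' 1 (SL S).length :=
    gapfree_canon _ hSLsorted hSLpos (hSnogap _ hSLmem)
  have hSLval : ∀ i, 1 ≤ i → i ≤ (SL S).length →
      botGet (SL S) i = (SL S).length + 1 - i := by
    intro i hi1 hi2
    conv_lhs => rw [hSLcanon]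
    rw [botGet_range' _ _ hi1 hi2]
  constructor
  · intro hA2' htype1 hodd
    have hr0 : residuum T m = 0 := htype1.1
    have happ := hA2'.1 ⟨hodd, hr0⟩ 1 (le_refl _) (by rw [hhatlen, hr0]; omega)
    have hidx : 1 + m - 1 = m := by omega
    rw [hidx] at happ
    have hL := cT.botGet_hatR_tail (i := m) (by omega) (by omega)
    rw [hL, show m - m = 0 by omega, ← cT.troot_eq] at happ
    exact happ.2
  · intro hTR
    constructor
    · rintro ⟨hodd, hr0⟩ i h1 h2
      have hodd' : (SL S).length % 2 ≠ 0 := by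
        intro h'
        exact hodd h'
      have htype1 : Type1 m T := by
        rcases htT with h' | h' | h'
        · exact h'
        · rw [h'.1] at hr0; omega
        · rw [h'.1] at hr0; omega
      have hfb : finOf T = T.b := cT.hfin12 (Or.inl htype1)
      have hbh : T.b + 1 ≤ (SL S).length := by
        have := hH'odd hodd
        rw [hr0] at this
        omega
      rw [hhatlen, hr0] at h2
      rcases Nat.lt_or_ge i 2 with hi2 | hi2
      · have hi1 : i = 1 := by omega
        subst hi1
        refine ⟨by omega, ?_⟩
        have hL := cT.botGet_hatR_tail (i := 1 + m - 1) (by omega) (by omega)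
        rw [hL, show m - (1 + m - 1) = 0 by omega, ← cT.troot_eq]
        exact hTR htype1 hodd
      · refine ⟨by omega, ?_⟩
        have hL := cT.botGet_hatR_right (j := i - 1) (by omega) (by omega)
        rw [hr0, show m - 0 + (i - 1) = i + m - 1 by omega] at hL
        rw [hL, cT.botGet_right_all hfb (by omega) (by omega),
          hSLval i (by omega) (by omega)]
        omega
    · intro hn i h1 h2
      rw [hhatlen] at h2
      by_cases hrT0 : residuum T m = 0
      · have heven : SEven S := by
          by_contra h'
          exact hn ⟨h', hrT0⟩
        have hbh := hH'even heven
        have htype1 : Type1 m T := by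
          rcases htT with h' | h' | h'
          · exact h'
          · rw [h'.1] at hrT0; omega
          · rw [h'.1] at hrT0; omega
        have hfb : finOf T = T.b := cT.hfin12 (Or.inl htype1)
        rw [hrT0] at h2
        have hib : i ≤ T.b := by omega
        refine ⟨by omega, ?_⟩
        have hL := cT.botGet_hatR_right (j := i) h1 hib
        rw [hrT0, show m - 0 + i = i + m by omega] at hL
        rw [hL, cT.botGet_right_all hfb h1 hib, hSLval i (by omega) (by omega)]
        omega
      · have hrT1' : residuum T m = 1 := by omega
        have haT2 := (cT.hr1 hrT1').1
        have hbT2 : 2 ≤ T.b := by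
          have := cT.hab
          omega
        rw [hrT1'] at h2
        have hib : i ≤ T.b - 1 := by omega
        have hbh : T.b ≤ (SL S).length + 1 := by
          by_cases heven : SEven S
          · have := hH'even heven
            omega
          · have := hH'odd heven
            have hodd' : (SL S).length % 2 ≠ 0 := fun h' => heven h'
            rw [hrT1'] at this
            omega
        refine ⟨by omega, ?_⟩
        have hL := cT.botGet_hatR_right (j := i + 1) (by omega) (by omega)
        rw [hrT1', show m - 1 + (i + 1) = i + m by omega] at hL
        rw [hL, cT.botGet_right_val (by omega) (by omega), hSLval i (by omega) (by omega)]
        omega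

end OrthoBij
namespace OrthoBij

open List

lemma tailOf_len {p : ℕ} {U : TwoCol} (h : IsTwoCol p U) : (tailOf U).length = p := by
  unfold tailOf
  rw [List.length_drop, h.2.2.2.1]
  have := h.2.2.1
  omega

end OrthoBij
open OrthoBij in
/-- Let `L = (T₁, …, T_ℓ, S)` be a structurally valid tuple satisfying
(H), (H'), (S), (G) and (T1) with its tail-root clause omitted.  Then (A2) and (A2')
hold for all consecutive pairs of `L` if and only if both (T2) and the tail-root clause
of (T1) hold. -/
theorem statement12 (k : ℕ) (hk : 1 ≤ k) (μ : List ℕ)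
    (hμ : IsPartitionL μ) (hμk : μ.length ≤ k)
    (d : KTupleData) (hd : IsKTuple k μ d)
    (hH : CondH μ d) (hH' : CondH' μ d) (hS : CondS d) (hG : CondG d)
    (hT1 : CondT1noTR μ d) :
    ((∀ i, i + 1 < μ.length →
        CondA2pair (μ.getD i 0) (μ.getD (i + 1) 0) (TAt d i) (TAt d (i + 1))) ∧
      (0 < μ.length →
        CondA2'pair (μ.getD (μ.length - 1) 0) (TAt d (μ.length - 1)) d.S)) ↔
    (CondT2 μ d ∧ CondT1TR μ d) := by
  obtain ⟨hlen, htc, hrect⟩ := hd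
  have hposμ : ∀ j, j < μ.length → 1 ≤ μ.getD j 0 := by
    intro j hj
    exact hμ.2 _ (getD_mem hj)
  have hsortμ : ∀ i, i + 1 < μ.length → μ.getD (i+1) 0 ≤ μ.getD i 0 := by
    intro i hi
    have h2 := List.pairwise_iff_getElem.1 hμ.1 i (i+1) (by omega) hi (by omega)
    have e1 : μ.getD (i+1) 0 = μ[i+1] := List.getD_eq_getElem _ _ hi
    have e2 : μ.getD i 0 = μ[i]'(by omega) := List.getD_eq_getElem _ _ (by omega)
    rw [e1, e2]
    exact h2
  have hcc : 1 ≤ 2 * k + 1 - 2 * μ.length := by omega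
  -- instantiated pair equivalences
  have hpair : ∀ i, i + 1 < μ.length →
      (CondA2pair (μ.getD i 0) (μ.getD (i + 1) 0) (TAt d i) (TAt d (i + 1)) ↔
        ∀ t, t < μ.getD (i+1) 0 →
          (tailOf (TAt d i)).getD t 0 ≤ (tailOf (TAt d (i+1))).getD t 0) := by
    intro i hi
    have hHi := hH i hi
    unfold resAt at hHi
    refine pair_equiv _ _ (hposμ (i+1) hi) (hsortμ i hi) _ _
      (htc i (by omega)) (htc (i+1) hi) ((hT1.1) i (by omega)) ((hT1.1) (i+1) hi) hHi ?_
    intro h3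
    have := hT1.2.1 i hi h3
    unfold resAt at this
    exact this
  have hspair : 0 < μ.length →
      (CondA2'pair (μ.getD (μ.length - 1) 0) (TAt d (μ.length - 1)) d.S ↔
        (Type1 (μ.getD (μ.length - 1) 0) (TAt d (μ.length - 1)) → ¬ SEven d.S →
          tailRoot (TAt d (μ.length - 1)) ≤ botGet (SL d.S) 1)) := by
    intro hl
    have hH'l := hH' hl
    unfold resAt at hH'l
    exact spair_equiv _ (hposμ _ (by omega)) _ _ _ (htc _ (by omega))
      ((hT1.1) _ (by omega)) hrect hcc hS hH'l.1 hH'l.2 (hT1.2.2 hl)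
  constructor
  · rintro ⟨hpairs, hlast⟩
    constructor
    · intro i t hi ht
      rw [tailOf_len (htc (i+1) hi)] at ht
      exact ((hpair i hi).1 (hpairs i hi)) t ht
    · intro hl htype1 hodd
      exact ((hspair hl).1 (hlast hl)) htype1 hodd
  · rintro ⟨hT2, hTR⟩
    constructor
    · intro i hi
      apply (hpair i hi).2
      intro t ht
      exact hT2 i t hi (by rw [tailOf_len (htc (i+1) hi)]; exact ht)
    · intro hl
      apply (hspair hl).2
      intro htype1 hodd
      exact hTR hl htype1 hodd
end

section
/- Let L = (T_1,…,T_ℓ,S) be a tuple as in the setting satisfying the explicit conditions (H), (H'), (S), (T1), (T2), (G). If T_i has residuum 1 (that is, T_i is of type 2 or type 3), then the tail root of T_i is a slot; in other words, the value one larger than the tail root of T_i does not occur in the left column of T_i. -/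
namespace OrthoBij

/-- In a strictly increasing list of positive naturals, the `j`-th entry is at least `j+1`. -/
lemma sorted_getD_ge (l : List ℕ) (hs : l.Pairwise (· < ·)) (hp : ∀ x ∈ l, 0 < x) :
    ∀ j, j < l.length → j + 1 ≤ l.getD j 0 := by
  intro j hj
  induction j with
  | zero =>
    rw [List.getD_eq_getElem _ _ hj]
    exact hp _ (List.getElem_mem hj)
  | succ n ih =>
    have hn : n < l.length := Nat.lt_of_succ_lt hj
    have h1 := ih hn
    have h2 : l.getD n 0 < l.getD (n + 1) 0 := by
      rw [List.getD_eq_getElem _ _ hj, List.getD_eq_getElem _ _ hn]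
      exact List.pairwise_iff_get.mp hs ⟨n, hn⟩ ⟨n + 1, hj⟩ (by simp)
    omega

/-- Strict monotonicity of `getD` for a strictly sorted list. -/
lemma sorted_getD_lt_s13 (l : List ℕ) (hs : l.Pairwise (· < ·)) {i j : ℕ}
    (hij : i < j) (hj : j < l.length) : l.getD i 0 < l.getD j 0 := by
  have hi : i < l.length := lt_trans hij hj
  rw [List.getD_eq_getElem _ _ hj, List.getD_eq_getElem _ _ hi]
  exact List.pairwise_iff_get.mp hs ⟨i, hi⟩ ⟨j, hj⟩ hij

/-- If every gap of a strictly increasing positive list lies in `l.drop p`, then the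
entries strictly above position `p` are consecutive, starting from `1`. -/
lemma consec (l : List ℕ) (hs : l.Pairwise (· < ·)) (hp : ∀ x ∈ l, 0 < x) (p : ℕ)
    (hgap : ∀ x, IsGapIn l x → x ∈ l.drop p) :
    ∀ j, j < p → j < l.length → l.getD j 0 = j + 1 := by
  intro j
  induction j using Nat.strong_induction_on with
  | _ j ih =>
    intro hjp hj
    have hge := sorted_getD_ge l hs hp j hj
    by_contra hne
    have hgt : j + 2 ≤ l.getD j 0 := by omega
    have hgapj : IsGapIn l (l.getD j 0) := by
      refine ⟨by rw [List.getD_eq_getElem _ _ hj]; exact List.getElem_mem hj, by omega, ?_⟩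
      intro hmem
      obtain ⟨⟨n, hn⟩, hget⟩ := List.mem_iff_get.mp hmem
      have hget' : l.getD n 0 = l.getD j 0 - 1 := by
        rw [List.getD_eq_getElem _ _ hn]
        exact List.get_eq_getElem.symm.trans hget
      rcases lt_trichotomy n j with h | h | h
      · have := ih n h (lt_trans h hjp) hn
        have h2 : l.getD n 0 < l.getD j 0 - 1 := by omega
        omega
      · subst h; omega
      · have := sorted_getD_lt_s13 l hs h hn
        omega
    have hdrop := hgap _ hgapj
    obtain ⟨⟨n, hn⟩, hget⟩ := List.mem_iff_get.mp hdrop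
    have hn' : p + n < l.length := by
      have := hn; rw [List.length_drop] at this; omega
    have hget' : l.getD (p + n) 0 = l.getD j 0 := by
      rw [List.getD_eq_getElem _ _ hn']
      rw [List.get_eq_getElem, List.getElem_drop] at hget
      exact hget
    have : l.getD j 0 < l.getD (p + n) 0 := sorted_getD_lt_s13 l hs (by omega) hn'
    omega

end OrthoBij

open OrthoBij in
/-- Let `L = (T₁, …, T_ℓ, S)` be a structurally valid tuple satisfying
the explicit conditions (H), (H'), (S), (T1), (T2), (G).  If `T_i` has residuum `1`, then
its tail root is a slot: the value one larger than the tail root does not occur in the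
left column of `T_i`. -/
theorem statement13 (k : ℕ) (hk : 1 ≤ k) (μ : List ℕ)
    (hμ : IsPartitionL μ) (hμk : μ.length ≤ k)
    (d : KTupleData) (hd : IsKTuple k μ d)
    (hH : CondH μ d) (hH' : CondH' μ d) (hS : CondS d)
    (hT1 : CondT1 μ d) (hT2 : CondT2 μ d) (hG : CondG d) :
    ∀ i, i < μ.length → resAt μ d i = 1 →
      (tailRoot (TAt d i) + 1) ∉ (TAt d i).left := by
  intro i hi hres hmem
  obtain ⟨hlen, hTs, hRect⟩ := hd
  have hTC := hTs i hi
  have hres0 : residuum (TAt d i) (μ.getD i 0) = 1 := hres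
  set T := TAt d i with hT
  set m := μ.getD i 0 with hm
  obtain ⟨hae, hbe, hab, hllen, hrlen, hlpos, hrpos, hlsort, hrsort, hslid0, hres1⟩ :=
    hTC
  have hm1 : 1 ≤ m := by
    have hmemμ : μ.getD i 0 ∈ μ := by
      rw [List.getD_eq_getElem _ _ hi]; exact List.getElem_mem hi
    exact hμ.2 _ hmemμ
  have hres' : residuum T m = 1 := hres
  have h0mem : (0 : ℕ) ∈ {s | s ≤ min T.a m ∧ SlidOK T s} := ⟨Nat.zero_le _, hslid0⟩
  have hbdd : BddAbove {s | s ≤ min T.a m ∧ SlidOK T s} :=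
    ⟨min T.a m, fun x hx => hx.1⟩
  have hle : residuum T m ≤ min T.a m := csSup_le ⟨0, h0mem⟩ (fun x hx => hx.1)
  have ha2 : 2 ≤ T.a := by
    rw [hres'] at hle
    obtain ⟨r, hr⟩ := hae
    omega
  -- all gaps of the left column lie in the lower tail
  have hgapLT : ∀ x, IsGapIn T.left x → x ∈ lowerTail T := by
    rcases hT1.1.1 i hi with h1 | h2 | h3
    · exfalso; have h10 : residuum T m = 0 := h1.1; omega
    · exact h2.2.2
    · exact h3.2.2.2
  have hcons : ∀ j, j < T.b - T.a + 1 → j < T.left.length → T.left.getD j 0 = j + 1 :=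
    consec T.left hlsort hlpos _ hgapLT
  have hba : T.b - T.a < T.left.length := by rw [hllen]; omega
  have hTR : tailRoot T = T.b - T.a + 1 := hcons _ (Nat.lt_succ_self _) hba
  rw [tailRoot] at hTR
  have hmem' : T.b - T.a + 2 ∈ T.left := by
    have : tailRoot T + 1 = T.b - T.a + 2 := by rw [tailRoot, hTR]
    rwa [this] at hmem
  obtain ⟨⟨n, hn⟩, hgetn⟩ := List.mem_iff_get.mp hmem'
  have hgetn' : T.left.getD n 0 = T.b - T.a + 2 := by
    rw [List.getD_eq_getElem _ _ hn]
    exact List.get_eq_getElem.symm.trans hgetn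
  have hngt : T.b - T.a < n := by
    by_contra h
    push_neg at h
    rcases lt_or_eq_of_le h with h' | h'
    · have := sorted_getD_lt_s13 T.left hlsort h' hba; omega
    · rw [h'] at hgetn'; omega
  have hm2 : 2 ≤ m := by
    have := hn; rw [hllen] at this; omega
  have hbal : T.b - T.a + 1 < T.left.length := by rw [hllen]; omega
  have hlast : T.left.getD (T.b - T.a + 1) 0 = T.b - T.a + 2 := by
    have hge := sorted_getD_ge T.left hlsort hlpos (T.b - T.a + 1) hbal
    have hle' : T.b - T.a + 1 ≤ n := by omega
    rcases lt_or_eq_of_le hle' with h' | h'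
    · have := sorted_getD_lt_s13 T.left hlsort h' hn; omega
    · rw [← h'] at hgetn'; omega
  have hall : ∀ j, j ≤ T.b - T.a + 1 → j < T.left.length → T.left.getD j 0 = j + 1 := by
    intro j hj hjl
    rcases lt_or_eq_of_le hj with h | h
    · exact hcons j h hjl
    · rw [h]; rw [hlast]
  have hslid2 : SlidOK T 2 := by
    intro t ht hat hlt
    have hrt : t + 1 ≤ T.right.getD t 0 := sorted_getD_ge T.right hrsort hrpos t ht
    have htb : t < T.b := by rwa [hrlen] at ht
    have hj : 2 + t - T.a ≤ T.b - T.a + 1 := by omega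
    rw [hall (2 + t - T.a) hj hlt]
    omega
  have h2mem : (2 : ℕ) ∈ {s | s ≤ min T.a m ∧ SlidOK T s} := ⟨by omega, hslid2⟩
  have h2le : 2 ≤ residuum T m := le_csSup hbdd h2mem
  omega
end
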